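/- arXiv:math/0602259 — 2 statements merged into one kernel-verified Lean document; each statement's English description precedes it below -/
import Mathlib

section
/- Let A be an indecomposable symmetrizable generalized Cartan matrix of infinite type whose Coxeter graph is bipartite, and let W be the Coxeter group with generators s₁,…,sₙ associated with the Coxeter matrix M of A. Then for every r ≥ 0 the Coxeter length of (t₊ t₋)^r equals r·n, where t₊ = ∏_{ε(k)=1} s_k and t₋ = ∏_{ε(k)=−1} s_k. Equivalently, the word obtained by concatenating r copies of the word (all indices k with ε(k) = 1, followed by all indices k with ε(k) = −1) is a reduced word in W. -/
/-! Statement 14 (Fomin–Zelevinsky, "Cluster algebras IV", Corollary 9.6):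
for an indecomposable symmetrizable generalized Cartan matrix of infinite type with
bipartite Coxeter graph, ℓ((t₊t₋)^r) = r·n in the associated Coxeter group. -/

open scoped Classical

noncomputable section

/-- The list of indices of a given sign, in increasing order. -/
def Lsgn (n : ℕ) (ε : Fin n → ℤˣ) (δ : ℤˣ) : List (Fin n) :=
  (List.finRange n).filter (fun k => ε k = δ)

/-- The entries of the Coxeter matrix of a generalized Cartan matrix `A`:
`m_{ii} = 1`, and for `i ≠ j`, `m_{ij} = 2, 3, 4, 6` or `∞` (encoded as `0`)
according to whether `a_{ij}a_{ji} = 0, 1, 2, 3` or `≥ 4`. -/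
def coxEntry {n : ℕ} (A : Matrix (Fin n) (Fin n) ℤ) (i j : Fin n) : ℕ :=
  if i = j then 1
  else if A i j * A j i = 0 then 2
  else if A i j * A j i = 1 then 3
  else if A i j * A j i = 2 then 4
  else if A i j * A j i = 3 then 6
  else 0

namespace Stmt14

variable {n : ℕ}

/-- `Ar A i x = ∑ j, A i j * x j`. -/
def Ar (A : Matrix (Fin n) (Fin n) ℤ) (i : Fin n) (x : Fin n → ℝ) : ℝ :=
  ∑ j, (A i j : ℝ) * x j

/-- basis vector -/
def ev (i : Fin n) : Fin n → ℝ := Pi.single i 1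

lemma Ar_add (A : Matrix (Fin n) (Fin n) ℤ) (i : Fin n) (x y : Fin n → ℝ) :
    Ar A i (x + y) = Ar A i x + Ar A i y := by
  simp [Ar, mul_add, Finset.sum_add_distrib]

lemma Ar_smul (A : Matrix (Fin n) (Fin n) ℤ) (i : Fin n) (c : ℝ) (x : Fin n → ℝ) :
    Ar A i (c • x) = c * Ar A i x := by
  simp only [Ar, Pi.smul_apply, smul_eq_mul, Finset.mul_sum]
  exact Finset.sum_congr rfl fun j _ => by ring

lemma Ar_ev (A : Matrix (Fin n) (Fin n) ℤ) (i k : Fin n) :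
    Ar A i (ev k) = (A i k : ℝ) := by
  rw [Ar]
  rw [Finset.sum_eq_single k]
  · simp [ev]
  · intro b _ hb; simp [ev, Pi.single_apply, hb]
  · simp

lemma Ar_smul_ev (A : Matrix (Fin n) (Fin n) ℤ) (i k : Fin n) (c : ℝ) :
    Ar A i (c • ev k) = c * (A i k : ℝ) := by
  rw [Ar_smul, Ar_ev]

/-- The reflection `σ_i` as a linear endomorphism of `Fin n → ℝ`. -/
def sig (A : Matrix (Fin n) (Fin n) ℤ) (i : Fin n) : Module.End ℝ (Fin n → ℝ) where
  toFun x := x - Ar A i x • ev i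
  map_add' x y := by rw [Ar_add]; module
  map_smul' c x := by simp only [RingHom.id_apply]; rw [Ar_smul]; module

lemma sig_apply (A : Matrix (Fin n) (Fin n) ℤ) (i : Fin n) (x : Fin n → ℝ) :
    sig A i x = x - Ar A i x • ev i := rfl

variable {A : Matrix (Fin n) (Fin n) ℤ}

lemma stepI (hdiag : ∀ i, A i i = 2) (i j : Fin n) (x : Fin n → ℝ) (α β : ℝ) :
    sig A i (x + α • ev i + β • ev j)
      = x + (-α - (A i j : ℝ) * β - Ar A i x) • ev i + β • ev j := by
  rw [sig_apply, Ar_add, Ar_add, Ar_smul_ev, Ar_smul_ev, hdiag i]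
  push_cast
  module

lemma sig_invol (hdiag : ∀ i, A i i = 2) (i : Fin n) :
    sig A i * sig A i = 1 := by
  apply LinearMap.ext; intro x
  have h0 : x = x + (0:ℝ) • ev i + (0:ℝ) • ev i := by module
  show sig A i (sig A i x) = x
  rw [h0]
  rw [stepI hdiag i i, stepI hdiag i i]
  rw [hdiag i]
  push_cast
  module


lemma stepJ (hdiag : ∀ i, A i i = 2) (i j : Fin n) (x : Fin n → ℝ) (α β : ℝ) :
    sig A j (x + α • ev i + β • ev j)
      = x + α • ev i + (-β - (A j i : ℝ) * α - Ar A j x) • ev j := by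
  rw [sig_apply, Ar_add, Ar_add, Ar_smul_ev, Ar_smul_ev, hdiag j]
  push_cast
  module

section Braid
variable (i j : Fin n)

lemma braid2 (hdiag : ∀ i, A i i = 2) (ha : A i j = 0) (hb : A j i = 0) :
    (sig A i * sig A j) ^ 2 = 1 := by
  apply LinearMap.ext; intro x
  have h0 : x = x + (0:ℝ) • ev i + (0:ℝ) • ev j := by module
  show ((sig A i * sig A j)^2) x = x
  simp only [pow_succ, pow_zero, one_mul, Module.End.mul_apply]
  nth_rewrite 1 [h0]
  rw [stepJ hdiag, stepI hdiag, stepJ hdiag, stepI hdiag, ha, hb]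
  push_cast
  module

lemma braid3 (hdiag : ∀ i, A i i = 2) (ha : A i j = -1) (hb : A j i = -1) :
    (sig A i * sig A j) ^ 3 = 1 := by
  apply LinearMap.ext; intro x
  have h0 : x = x + (0:ℝ) • ev i + (0:ℝ) • ev j := by module
  show ((sig A i * sig A j)^3) x = x
  simp only [pow_succ, pow_zero, one_mul, Module.End.mul_apply]
  nth_rewrite 1 [h0]
  rw [stepJ hdiag, stepI hdiag, stepJ hdiag, stepI hdiag, stepJ hdiag, stepI hdiag, ha, hb]
  push_cast
  module

lemma braid4 (hdiag : ∀ i, A i i = 2) (ha : A i j = -1) (hb : A j i = -2) :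
    (sig A i * sig A j) ^ 4 = 1 := by
  apply LinearMap.ext; intro x
  have h0 : x = x + (0:ℝ) • ev i + (0:ℝ) • ev j := by module
  show ((sig A i * sig A j)^4) x = x
  simp only [pow_succ, pow_zero, one_mul, Module.End.mul_apply]
  nth_rewrite 1 [h0]
  rw [stepJ hdiag, stepI hdiag, stepJ hdiag, stepI hdiag, stepJ hdiag, stepI hdiag,
    stepJ hdiag, stepI hdiag, ha, hb]
  push_cast
  module

lemma braid6 (hdiag : ∀ i, A i i = 2) (ha : A i j = -1) (hb : A j i = -3) :
    (sig A i * sig A j) ^ 6 = 1 := by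
  apply LinearMap.ext; intro x
  have h0 : x = x + (0:ℝ) • ev i + (0:ℝ) • ev j := by module
  show ((sig A i * sig A j)^6) x = x
  simp only [pow_succ, pow_zero, one_mul, Module.End.mul_apply]
  nth_rewrite 1 [h0]
  rw [stepJ hdiag, stepI hdiag, stepJ hdiag, stepI hdiag, stepJ hdiag, stepI hdiag,
    stepJ hdiag, stepI hdiag, stepJ hdiag, stepI hdiag, stepJ hdiag, stepI hdiag, ha, hb]
  push_cast
  module

end Braid

/-- swap trick -/
lemma swap_pow {Mo : Type*} [Monoid Mo] (f g : Mo) (hg : g * g = 1) (m : ℕ)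
    (h : (f * g) ^ m = 1) : (g * f) ^ m = 1 := by
  have semi : ∀ m : ℕ, g * (f * g) ^ m = (g * f) ^ m * g := by
    intro m
    induction m with
    | zero => simp
    | succ k ih =>
      rw [pow_succ, ← mul_assoc, ih, pow_succ]
      simp only [mul_assoc]
  have h2 : (g * f) ^ m * g = g := by rw [← semi, h, mul_one]
  calc (g * f) ^ m = (g * f) ^ m * (g * g) := by rw [hg, mul_one]
    _ = ((g * f) ^ m * g) * g := by rw [mul_assoc]
    _ = g * g := by rw [h2]
    _ = 1 := hg

/-! ### Lifting to the Coxeter group -/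

section Lift

variable {M : CoxeterMatrix (Fin n)} {W : Type} [Group W] (cs : CoxeterSystem M W)

/-- The Coxeter matrix entries from `coxEntry`. -/
lemma isLiftable (hdiag : ∀ i, A i i = 2) (hoff : ∀ i j, i ≠ j → A i j ≤ 0)
    (d : Fin n → ℤ) (hd : ∀ i, 0 < d i) (hsym : ∀ i j, d i * A i j = d j * A j i)
    (hM : ∀ i j, M.M i j = (if i = j then 1
      else if A i j * A j i = 0 then 2
      else if A i j * A j i = 1 then 3
      else if A i j * A j i = 2 then 4
      else if A i j * A j i = 3 then 6
      else 0)) :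
    CoxeterMatrix.IsLiftable M (fun i => sig A i) := by
  intro i j
  show (sig A i * sig A j) ^ M.M i j = 1
  by_cases hij : i = j
  · subst hij
    rw [hM i i, if_pos rfl, pow_one]
    exact sig_invol hdiag i
  · have hij' : j ≠ i := fun h => hij h.symm
    have ha : A i j ≤ 0 := hoff i j hij
    have hb : A j i ≤ 0 := hoff j i hij'
    have hzero : A i j = 0 → A j i = 0 := by
      intro h
      have := hsym i j
      rw [h, mul_zero] at this
      have hdj := hd j
      exact (mul_eq_zero.mp this.symm).resolve_left (by omega)
    have hzero' : A j i = 0 → A i j = 0 := by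
      intro h
      have := hsym j i
      rw [h, mul_zero] at this
      have hdi := hd i
      exact (mul_eq_zero.mp this.symm).resolve_left (by omega)
    rw [hM i j, if_neg hij]
    by_cases h0 : A i j * A j i = 0
    · rw [if_pos h0]
      rcases mul_eq_zero.mp h0 with h | h
      · exact braid2 i j hdiag h (hzero h)
      · exact braid2 i j hdiag (hzero' h) h
    · rw [if_neg h0]
      have hane : A i j ≠ 0 := fun h => h0 (by rw [h]; ring)
      have hbne : A j i ≠ 0 := fun h => h0 (by rw [h]; ring)
      have ha1 : A i j ≤ -1 := by omega
      have hb1 : A j i ≤ -1 := by omega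
      by_cases h1 : A i j * A j i = 1
      · rw [if_pos h1]
        have : A i j = -1 ∧ A j i = -1 := by constructor <;> nlinarith
        exact braid3 i j hdiag this.1 this.2
      · rw [if_neg h1]
        by_cases h2 : A i j * A j i = 2
        · rw [if_pos h2]
          have hcase : (A i j = -1 ∧ A j i = -2) ∨ (A i j = -2 ∧ A j i = -1) := by
            have h3 : -2 ≤ A i j := by nlinarith
            rcases (by omega : A i j = -1 ∨ A i j = -2) with h | h <;> rw [h] at h2
            · left; exact ⟨h, by omega⟩
            · right; exact ⟨h, by omega⟩
          rcases hcase with ⟨u, v⟩ | ⟨u, v⟩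
          · exact braid4 i j hdiag u v
          · have := braid4 j i hdiag v u
            exact swap_pow (sig A j) (sig A i) (sig_invol hdiag i) 4 this
        · rw [if_neg h2]
          by_cases h3 : A i j * A j i = 3
          · rw [if_pos h3]
            have hcase : (A i j = -1 ∧ A j i = -3) ∨ (A i j = -3 ∧ A j i = -1) := by
              have h4 : -3 ≤ A i j := by nlinarith
              rcases (by omega : A i j = -1 ∨ A i j = -2 ∨ A i j = -3) with h | h | h <;>
                rw [h] at h3
              · left; exact ⟨h, by omega⟩
              · exfalso; omega
              · right; exact ⟨h, by omega⟩
            rcases hcase with ⟨u, v⟩ | ⟨u, v⟩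
            · exact braid6 i j hdiag u v
            · have := braid6 j i hdiag v u
              exact swap_pow (sig A j) (sig A i) (sig_invol hdiag i) 6 this
          · rw [if_neg h3, pow_zero]

end Lift

/-! ### Coefficient sequences for rank-2 alternating words -/

/-- Coefficients of the vector `σ_{x_c} ⋯ σ_{x_1} e_i`, where `x_1 = j, x_2 = i, …`. -/
def gseq (α β : ℤ) : ℕ → ℤ × ℤ
  | 0 => (1, 0)
  | c + 1 =>
      if Even c then ((gseq α β c).1, β * (gseq α β c).1 - (gseq α β c).2)
      else (α * (gseq α β c).2 - (gseq α β c).1, (gseq α β c).2)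

lemma gseq_succ (α β : ℤ) (c : ℕ) :
    gseq α β (c + 1) =
      if Even c then ((gseq α β c).1, β * (gseq α β c).1 - (gseq α β c).2)
      else (α * (gseq α β c).2 - (gseq α β c).1, (gseq α β c).2) := rfl

/-- positivity of the rank-2 coefficients in the infinite case `αβ ≥ 4`. -/
lemma gseq_nonneg_ge4 (α β : ℤ) (hα : 0 ≤ α) (hβ : 0 ≤ β) (hαβ : 4 ≤ α * β) :
    ∀ c, 0 ≤ (gseq α β c).1 ∧ 0 ≤ (gseq α β c).2 := by
  have hβ1 : 1 ≤ β := by nlinarith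
  have hα1 : 1 ≤ α := by nlinarith
  -- strengthened invariant
  have key : ∀ c, 1 ≤ c →
      (0 ≤ (gseq α β c).1 ∧ 0 ≤ (gseq α β c).2 ∧
        (if Even c then (2 * (gseq α β c).2 ≤ β * (gseq α β c).1 ∧
                          α * (gseq α β c).2 ≤ 2 * (gseq α β c).1)
                   else (2 * (gseq α β c).1 ≤ α * (gseq α β c).2 ∧
                          β * (gseq α β c).1 ≤ 2 * (gseq α β c).2))) := by
    intro c hc
    induction c with
    | zero => omega
    | succ k ih =>
      rcases Nat.eq_or_lt_of_le hc with h1 | h1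
      · -- k + 1 = 1, i.e. k = 0
        have hk : k = 0 := by omega
        subst hk
        simp only [gseq_succ, Even.zero, if_pos, gseq]
        have hodd : ¬ Even (0 + 1) := by decide
        rw [if_neg hodd]
        norm_num
        refine ⟨hβ, ?_, ?_⟩ <;> nlinarith
      · -- k ≥ 1
        have hk : 1 ≤ k := by omega
        obtain ⟨hp, hq, hinv⟩ := ih hk
        rcases Nat.even_or_odd k with hke | hko
        · -- k even (k ≥ 2), step applies σ_j : q' = β p - q
          rw [if_pos hke] at hinv
          obtain ⟨i1, i2⟩ := hinv
          have hodd : ¬ Even (k + 1) := by simp [Nat.even_add_one, hke]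
          rw [gseq_succ, if_pos hke]
          rw [if_neg hodd]
          simp only
          refine ⟨hp, by nlinarith, ?_, ?_⟩ <;> nlinarith
        · -- k odd, step applies σ_i : p' = α q - p
          have hko' : ¬ Even k := Nat.not_even_iff_odd.mpr hko
          rw [if_neg hko'] at hinv
          obtain ⟨i1, i2⟩ := hinv
          have heven : Even (k + 1) := Nat.even_add_one.mpr hko'
          rw [gseq_succ, if_neg hko']
          rw [if_pos heven]
          simp only
          refine ⟨by nlinarith, hq, ?_, ?_⟩ <;> nlinarith
  intro c
  rcases Nat.eq_zero_or_pos c with h | h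
  · subst h; simp [gseq]
  · obtain ⟨a, b, _⟩ := key c h
    exact ⟨a, b⟩

/-- positivity of the rank-2 coefficients in the finite cases. -/
lemma gseq_nonneg_fin (α β : ℤ) (hα : 0 ≤ α) (hβ : 0 ≤ β) (K : ℤ) (hK : α * β = K)
    (c : ℕ)
    (hrange : (K = 0 ∧ c ≤ 1) ∨ (K = 1 ∧ c ≤ 2) ∨ (K = 2 ∧ c ≤ 3) ∨ (K = 3 ∧ c ≤ 5)) :
    0 ≤ (gseq α β c).1 ∧ 0 ≤ (gseq α β c).2 := by
  rcases hrange with ⟨hK0, hc⟩ | ⟨hK0, hc⟩ | ⟨hK0, hc⟩ | ⟨hK0, hc⟩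
  · subst hK0
    interval_cases c <;> simp [gseq] <;> nlinarith
  · subst hK0
    have hα1 : 1 ≤ α := by nlinarith
    have hβ1 : 1 ≤ β := by nlinarith
    have h2 := mul_le_mul_of_nonneg_left hβ1 hα
    rw [mul_one, hK] at h2
    have : α = 1 ∧ β = 1 := by constructor <;> nlinarith
    obtain ⟨rfl, rfl⟩ := this
    interval_cases c <;> simp [gseq] <;> decide
  · subst hK0
    have hcase : (α = 1 ∧ β = 2) ∨ (α = 2 ∧ β = 1) := by
      have h1 : 1 ≤ α := by nlinarith
      have hβ1 : 1 ≤ β := by nlinarith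
      have h2' := mul_le_mul_of_nonneg_left hβ1 hα
      rw [mul_one, hK] at h2'
      have h2 : α ≤ 2 := h2'
      interval_cases α <;> [left; right] <;> constructor <;> omega
    rcases hcase with ⟨rfl, rfl⟩ | ⟨rfl, rfl⟩ <;>
      (interval_cases c <;> simp [gseq] <;> decide)
  · subst hK0
    have hcase : (α = 1 ∧ β = 3) ∨ (α = 3 ∧ β = 1) := by
      have h1 : 1 ≤ α := by nlinarith
      have hβ1 : 1 ≤ β := by nlinarith
      have h2' := mul_le_mul_of_nonneg_left hβ1 hα
      rw [mul_one, hK] at h2'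
      have h2 : α ≤ 3 := h2'
      interval_cases α
      · left; constructor <;> omega
      · exfalso; omega
      · right; constructor <;> omega
    rcases hcase with ⟨rfl, rfl⟩ | ⟨rfl, rfl⟩ <;>
      (interval_cases c <;> simp [gseq] <;> decide)


/-! ### The representation and roots of alternating words -/

section Dich

open CoxeterSystem

variable {M : CoxeterMatrix (Fin n)} {W : Type} [Group W] (cs : CoxeterSystem M W)
variable (ρ : W →* Module.End ℝ (Fin n → ℝ))

lemma Ar_zero (i : Fin n) : Ar A i 0 = 0 := by simp [Ar]

lemma sig_ev_self (hdiag : ∀ i, A i i = 2) (i : Fin n) :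
    sig A i (ev i) = - ev i := by
  rw [sig_apply, Ar_ev, hdiag i]
  push_cast
  module

lemma rootvec (hdiag : ∀ i, A i i = 2) (hρ : ∀ i, ρ (cs.simple i) = sig A i)
    (i j : Fin n) (c : ℕ) :
    ρ (cs.wordProd (alternatingWord i j c)) (ev i)
      = ((gseq (-(A i j)) (-(A j i)) c).1 : ℝ) • ev i
        + ((gseq (-(A i j)) (-(A j i)) c).2 : ℝ) • ev j := by
  induction c with
  | zero =>
    simp only [alternatingWord, wordProd_nil, map_one, Module.End.one_apply, gseq]
    push_cast
    module
  | succ c ih =>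
    rw [alternatingWord_succ', wordProd_cons, map_mul, Module.End.mul_apply, ih]
    by_cases hc : Even c
    · rw [if_pos hc, hρ j]
      have h0 : ((gseq (-(A i j)) (-(A j i)) c).1 : ℝ) • ev i
          + ((gseq (-(A i j)) (-(A j i)) c).2 : ℝ) • ev j
          = (0 : Fin n → ℝ) + ((gseq (-(A i j)) (-(A j i)) c).1 : ℝ) • ev i
            + ((gseq (-(A i j)) (-(A j i)) c).2 : ℝ) • ev j := by module
      rw [h0, stepJ hdiag, Ar_zero, gseq_succ, if_pos hc]
      push_cast
      module
    · rw [if_neg hc, hρ i]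
      have h0 : ((gseq (-(A i j)) (-(A j i)) c).1 : ℝ) • ev i
          + ((gseq (-(A i j)) (-(A j i)) c).2 : ℝ) • ev j
          = (0 : Fin n → ℝ) + ((gseq (-(A i j)) (-(A j i)) c).1 : ℝ) • ev i
            + ((gseq (-(A i j)) (-(A j i)) c).2 : ℝ) • ev j := by module
      rw [h0, stepI hdiag, Ar_zero, gseq_succ, if_neg hc]
      push_cast
      module

/-- nonnegativity of alternating-word root coefficients below the Coxeter number. -/
lemma coeff_nonneg (hoff : ∀ i j, i ≠ j → A i j ≤ 0)
    (hM : ∀ i j, M.M i j = (if i = j then 1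
      else if A i j * A j i = 0 then 2
      else if A i j * A j i = 1 then 3
      else if A i j * A j i = 2 then 4
      else if A i j * A j i = 3 then 6
      else 0))
    (i j : Fin n) (hij : i ≠ j) (c : ℕ) (hbound : M.M i j = 0 ∨ c < M.M i j) :
    0 ≤ (gseq (-(A i j)) (-(A j i)) c).1 ∧ 0 ≤ (gseq (-(A i j)) (-(A j i)) c).2 := by
  have hMij := hM i j
  rw [if_neg hij] at hMij
  have ha : A i j ≤ 0 := hoff i j hij
  have hb : A j i ≤ 0 := hoff j i (fun h => hij h.symm)
  have hprod : (-(A i j)) * (-(A j i)) = A i j * A j i := by ring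
  by_cases h0 : A i j * A j i = 0
  · rw [if_pos h0] at hMij
    refine gseq_nonneg_fin _ _ (by omega) (by omega) 0 (by omega) c (Or.inl ⟨rfl, by omega⟩)
  · rw [if_neg h0] at hMij
    by_cases h1 : A i j * A j i = 1
    · rw [if_pos h1] at hMij
      refine gseq_nonneg_fin _ _ (by omega) (by omega) 1 (by omega) c
        (Or.inr (Or.inl ⟨rfl, by omega⟩))
    · rw [if_neg h1] at hMij
      by_cases h2 : A i j * A j i = 2
      · rw [if_pos h2] at hMij
        refine gseq_nonneg_fin _ _ (by omega) (by omega) 2 (by omega) c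
          (Or.inr (Or.inr (Or.inl ⟨rfl, by omega⟩)))
      · rw [if_neg h2] at hMij
        by_cases h3 : A i j * A j i = 3
        · rw [if_pos h3] at hMij
          refine gseq_nonneg_fin _ _ (by omega) (by omega) 3 (by omega) c
            (Or.inr (Or.inr (Or.inr ⟨rfl, by omega⟩)))
        · rw [if_neg h3] at hMij
          have hK : 0 ≤ A i j * A j i := by nlinarith [mul_nonneg (neg_nonneg.2 ha) (neg_nonneg.2 hb)]
          have hK4 : 4 ≤ (-(A i j)) * (-(A j i)) := by rw [hprod]; omega
          exact gseq_nonneg_ge4 _ _ (by omega) (by omega) hK4 c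

/-- **The dichotomy theorem** (root positivity). -/
theorem dichotomy (hdiag : ∀ i, A i i = 2) (hoff : ∀ i j, i ≠ j → A i j ≤ 0)
    (hM : ∀ i j, M.M i j = (if i = j then 1
      else if A i j * A j i = 0 then 2
      else if A i j * A j i = 1 then 3
      else if A i j * A j i = 2 then 4
      else if A i j * A j i = 3 then 6
      else 0))
    (hρ : ∀ i, ρ (cs.simple i) = sig A i) :
    ∀ N (w : W), cs.length w = N → ∀ i : Fin n,
      (cs.length (w * cs.simple i) = N + 1 → ∀ k, 0 ≤ ρ w (ev i) k) ∧
      (cs.length (w * cs.simple i) + 1 = N → ∀ k, ρ w (ev i) k ≤ 0) := by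
  intro N
  induction N using Nat.strong_induction_on with
  | _ N IH =>
  intro w hw i
  constructor
  · -- ascent case
    intro hasc
    by_cases hw1 : w = 1
    · subst hw1
      rw [map_one, Module.End.one_apply]
      intro k
      by_cases hk : k = i
      · subst hk; simp [ev]
      · simp [ev, Pi.single_apply, hk]
    · obtain ⟨j, hdesc⟩ := cs.exists_rightDescent_of_ne_one hw1
      have hNpos : 1 ≤ N := by
        rcases Nat.eq_zero_or_pos N with h | h
        · exfalso; exact hw1 (cs.length_eq_zero_iff.mp (h ▸ hw))
        · exact h
      have hij : i ≠ j := by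
        rintro rfl
        have h2 : cs.length (w * cs.simple i) < cs.length w := hdesc
        omega
      -- the descending alternating chain
      have CH : ∀ (kk : ℕ) (c : ℕ) (w_c : W), 1 ≤ c → N = c + kk →
          cs.length w_c = kk →
          cs.length (w_c * cs.simple (if Even c then i else j)) = kk + 1 →
          w = w_c * cs.wordProd (alternatingWord i j c) →
          (M.M i j = 0 ∨ c ≤ M.M i j) →
          ∀ k, 0 ≤ ρ w (ev i) k := by
        intro kk
        induction kk using Nat.strong_induction_on with
        | _ kk IHk =>
        intro c w_c hc1 hNck hlwc hlhead hw_eq hbound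
        by_cases hcm : c = M.M i j
        · -- braid contradiction: the chain cannot reach length m
          exfalso
          have hm1 : 1 ≤ M.M i j := by omega
          have h1 : w * cs.simple i
              = w_c * cs.wordProd (alternatingWord j i (c + 1)) := by
            rw [hw_eq, mul_assoc, alternatingWord_succ j i c, cs.wordProd_concat]
          have hsymm : M.M j i = M.M i j := M.symmetric j i
          have h2 : cs.wordProd (alternatingWord j i (c + 1))
              = cs.wordProd (alternatingWord i j (M.M j i * 2 - (c + 1))) :=
            cs.prod_alternatingWord_eq_prod_alternatingWord_sub j i (c + 1) (by omega)
          have h3 : cs.length (w * cs.simple i) ≤ kk + (c - 1) := by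
            rw [h1, h2]
            calc cs.length (w_c * cs.wordProd (alternatingWord i j (M.M j i * 2 - (c + 1))))
                ≤ cs.length w_c
                  + cs.length (cs.wordProd (alternatingWord i j (M.M j i * 2 - (c + 1)))) :=
                  cs.length_mul_le _ _
              _ ≤ kk + (alternatingWord i j (M.M j i * 2 - (c + 1))).length := by
                  rw [hlwc]
                  exact Nat.add_le_add_left (cs.length_wordProd_le _) kk
              _ = kk + (M.M j i * 2 - (c + 1)) := by rw [length_alternatingWord]
              _ = kk + (c - 1) := by omega
          omega
        · have hbound' : M.M i j = 0 ∨ c < M.M i j := by omega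
          set y : Fin n := if Even c then j else i with hy
          rcases cs.length_mul_simple w_c y with hup | hdown
          · -- ascent at y : finish using coefficient positivity
            have hkltN : kk < N := by omega
            have hwc_y : ∀ k, 0 ≤ ρ w_c (ev y) k :=
              ((IH kk hkltN w_c hlwc y).1) (by omega)
            have hwc_x : ∀ k, 0 ≤ ρ w_c (ev (if Even c then i else j)) k :=
              ((IH kk hkltN w_c hlwc _).1) hlhead
            have hwi : ∀ k, 0 ≤ ρ w_c (ev i) k := by
              by_cases hc : Even c
              · intro k; have := hwc_x k; rwa [if_pos hc] at this
              · intro k; have := hwc_y k; rwa [hy, if_neg hc] at this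
            have hwj : ∀ k, 0 ≤ ρ w_c (ev j) k := by
              by_cases hc : Even c
              · intro k; have := hwc_y k; rwa [hy, if_pos hc] at this
              · intro k; have := hwc_x k; rwa [if_neg hc] at this
            obtain ⟨hp, hq⟩ := coeff_nonneg hoff hM i j hij c hbound'
            intro k
            rw [hw_eq, map_mul, Module.End.mul_apply, rootvec cs ρ hdiag hρ i j c,
              map_add, map_smul, map_smul]
            have := hwi k
            have := hwj k
            simp only [Pi.add_apply, Pi.smul_apply, smul_eq_mul]
            have hp' : (0:ℝ) ≤ ((gseq (-(A i j)) (-(A j i)) c).1 : ℝ) := by exact_mod_cast hp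
            have hq' : (0:ℝ) ≤ ((gseq (-(A i j)) (-(A j i)) c).2 : ℝ) := by exact_mod_cast hq
            positivity
          · -- descent at y : recurse
            have hkpos : 1 ≤ kk := by omega
            refine IHk (kk - 1) (by omega) (c + 1) (w_c * cs.simple y) (by omega)
              (by omega) (by omega) ?_ ?_ (by omega)
            · -- head letter condition at c + 1
              have : (if Even (c+1) then i else j) = y := by
                by_cases hc : Even c
                · rw [hy, if_pos hc, if_neg (by simp [Nat.even_add_one, hc])]
                · rw [hy, if_neg hc, if_pos (by simp [Nat.even_add_one, hc])]
              rw [this, cs.simple_mul_simple_cancel_right]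
              omega
            · rw [alternatingWord_succ', wordProd_cons, ← hy]
              rw [mul_assoc, ← mul_assoc (cs.simple y), cs.simple_mul_simple_self, one_mul]
              exact hw_eq
      -- start the chain at c = 1 with the descent j
      have hdesc' : cs.length (w * cs.simple j) + 1 = N := by
        have h2 : cs.length (w * cs.simple j) < cs.length w := hdesc
        rcases cs.length_mul_simple w j with h | h
        · omega
        · omega
      refine CH (N - 1) 1 (w * cs.simple j) le_rfl (by omega) (by omega) ?_ ?_ (by omega)
      · rw [if_neg (by decide), cs.simple_mul_simple_cancel_right]
        omega
      · have : alternatingWord i j 1 = [j] := by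
          rw [show (1:ℕ) = 0 + 1 from rfl, alternatingWord_succ]
          simp [alternatingWord]
        rw [this, cs.wordProd_singleton, cs.simple_mul_simple_cancel_right]
  · -- descent case : follows from the ascent case one level down
    intro hdesc2
    have hN1 : 1 ≤ N := by omega
    have hlw' : cs.length (w * cs.simple i) = N - 1 := by omega
    have hasc' : cs.length ((w * cs.simple i) * cs.simple i) = (N - 1) + 1 := by
      rw [cs.simple_mul_simple_cancel_right]; omega
    have h := ((IH (N-1) (by omega) (w * cs.simple i) hlw' i).1) hasc'
    intro k
    have heq : ρ w (ev i) = - ρ (w * cs.simple i) (ev i) := by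
      have : w = (w * cs.simple i) * cs.simple i := by
        rw [cs.simple_mul_simple_cancel_right]
      rw [this]  -- may loop; fix below
      rw [map_mul, Module.End.mul_apply, hρ i, sig_ev_self hdiag, map_neg]
      rw [cs.simple_mul_simple_cancel_right]
    rw [heq]
    simp only [Pi.neg_apply, neg_nonpos]
    exact h k

end Dich

/-! ### The Vinberg vector -/

section Vinberg

/-- the symmetrized quadratic form -/
def Qf (A : Matrix (Fin n) (Fin n) ℤ) (d : Fin n → ℤ) (x : Fin n → ℝ) : ℝ :=
  ∑ i, ∑ j, ((d i : ℝ) * (A i j : ℝ)) * x i * x j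

/-- the symmetrized bilinear form -/
def Bf (A : Matrix (Fin n) (Fin n) ℤ) (d : Fin n → ℤ) (x y : Fin n → ℝ) : ℝ :=
  ∑ i, ∑ j, ((d i : ℝ) * (A i j : ℝ)) * x i * y j

variable {d : Fin n → ℤ}

lemma quad_zero_of_nonneg (a b : ℝ) (h : ∀ t : ℝ, 0 ≤ a * t + b * t ^ 2) : a = 0 := by
  by_contra ha
  have ha2 : 0 < a ^ 2 := by positivity
  rcases le_or_gt b 0 with hb | hb
  · have h1 := h (-a)
    nlinarith
  · have h1 := h (-a / (2 * b))
    have hb' : b ≠ 0 := ne_of_gt hb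
    have h2 : a * (-a / (2 * b)) + b * (-a / (2 * b)) ^ 2 = -(a ^ 2) / (4 * b) := by
      field_simp
      ring
    rw [h2] at h1
    have h3 : -(a ^ 2) / (4 * b) < 0 := div_neg_of_neg_of_pos (by nlinarith) (by linarith)
    linarith

lemma vinberg (hoff : ∀ i j, i ≠ j → A i j ≤ 0)
    (hd : ∀ i, 0 < d i) (hsym : ∀ i j, d i * A i j = d j * A j i)
    (hind : (SimpleGraph.fromRel (fun i j : Fin n => A i j ≠ 0)).Connected)
    (hinf : ¬ ∀ x : Fin n → ℚ, x ≠ 0 →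
      0 < ∑ i, ∑ j, ((d i * A i j : ℤ) : ℚ) * x i * x j) :
    ∃ u : Fin n → ℝ, (∀ k, 0 < u k) ∧ (∀ k, Ar A k u ≤ 0) := by
  classical
  have hS : ∀ i j, (d i : ℝ) * (A i j : ℝ) = (d j : ℝ) * (A j i : ℝ) := by
    intro i j
    exact_mod_cast congrArg (fun z : ℤ => (z : ℝ)) (hsym i j)
  have hnonempty : Nonempty (Fin n) := hind.nonempty
  obtain ⟨i₀⟩ := hnonempty
  -- a rational vector with nonpositive form value
  push_neg at hinf
  obtain ⟨xq, hxq0, hxqle⟩ := hinf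
  set x₀ : Fin n → ℝ := fun i => ((xq i : ℚ) : ℝ) with hx₀
  have hx₀ne : x₀ ≠ 0 := by
    intro h
    apply hxq0
    funext i
    have := congrFun h i
    simpa [hx₀] using this
  have hQx₀ : Qf A d x₀ ≤ 0 := by
    have : ((∑ i, ∑ j, ((d i * A i j : ℤ) : ℚ) * xq i * xq j : ℚ) : ℝ) ≤ 0 := by
      exact_mod_cast hxqle
    calc Qf A d x₀ = ((∑ i, ∑ j, ((d i * A i j : ℤ) : ℚ) * xq i * xq j : ℚ) : ℝ) := by
          rw [Qf]
          push_cast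
          rfl
      _ ≤ 0 := this
  -- the sphere
  set Sph : Set (Fin n → ℝ) := {x | ∑ i, x i ^ 2 = 1} with hSph
  have hQcont : Continuous (Qf A d) := by
    apply continuous_finset_sum
    intro i _
    apply continuous_finset_sum
    intro j _
    exact (continuous_const.mul (continuous_apply i)).mul (continuous_apply j)
  have hNcont : Continuous (fun x : Fin n → ℝ => ∑ i, x i ^ 2) := by
    apply continuous_finset_sum
    intro i _
    exact (continuous_apply i).pow 2
  have hclosed : IsClosed Sph := isClosed_eq hNcont continuous_const
  have hsub : Sph ⊆ Metric.closedBall 0 1 := by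
    intro x hx
    rw [Metric.mem_closedBall, dist_zero_right]
    rw [pi_norm_le_iff_of_nonneg (by norm_num)]
    intro k
    rw [Real.norm_eq_abs, abs_le]
    have h1 : x k ^ 2 ≤ 1 := by
      rw [← hx]
      have : ∀ i ∈ Finset.univ, 0 ≤ x i ^ 2 := fun i _ => sq_nonneg _
      exact Finset.single_le_sum this (Finset.mem_univ k)
    constructor <;> nlinarith
  have hcomp : IsCompact Sph :=
    (isCompact_closedBall (0 : Fin n → ℝ) 1).of_isClosed_subset hclosed hsub
  have hSne : Sph.Nonempty := by
    refine ⟨ev i₀, ?_⟩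
    show ∑ i, ev i₀ i ^ 2 = 1
    rw [Finset.sum_eq_single i₀]
    · simp [ev]
    · intro b _ hb; simp [ev, Pi.single_apply, hb]
    · simp
  obtain ⟨v, hvS, hvmin⟩ := hcomp.exists_isMinOn hSne hQcont.continuousOn
  set lam : ℝ := Qf A d v with hlam
  -- homogeneity of Q
  have hQhom : ∀ (c : ℝ) (x : Fin n → ℝ), Qf A d (c • x) = c ^ 2 * Qf A d x := by
    intro c x
    rw [Qf, Qf, Finset.mul_sum]
    apply Finset.sum_congr rfl
    intro i _
    rw [Finset.mul_sum]
    apply Finset.sum_congr rfl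
    intro j _
    simp only [Pi.smul_apply, smul_eq_mul]
    ring
  have hNhom : ∀ (c : ℝ) (x : Fin n → ℝ), (∑ i, (c • x) i ^ 2) = c ^ 2 * ∑ i, x i ^ 2 := by
    intro c x
    rw [Finset.mul_sum]
    apply Finset.sum_congr rfl
    intro i _
    simp only [Pi.smul_apply, smul_eq_mul]
    ring
  -- global lower bound
  have hglobal : ∀ y : Fin n → ℝ, lam * (∑ i, y i ^ 2) ≤ Qf A d y := by
    intro y
    by_cases hy : (∑ i, y i ^ 2) = 0
    · have hyz : ∀ i, y i = 0 := by
        intro i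
        have h1 : ∀ i ∈ Finset.univ, (0:ℝ) ≤ y i ^ 2 := fun i _ => sq_nonneg _
        have := (Finset.sum_eq_zero_iff_of_nonneg h1).mp hy i (Finset.mem_univ i)
        exact pow_eq_zero_iff (by norm_num) |>.mp this
      have hy0 : y = 0 := funext hyz
      rw [hy0]
      simp [Qf]
    · have hspos : 0 < ∑ i, y i ^ 2 := by
        rcases lt_or_eq_of_le (Finset.sum_nonneg (fun i _ => sq_nonneg (y i))) with h | h
        · exact h
        · exact absurd h.symm hy
      set s : ℝ := ∑ i, y i ^ 2
      set t : ℝ := (Real.sqrt s)⁻¹ with ht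
      have hsqrt : Real.sqrt s > 0 := Real.sqrt_pos.mpr hspos
      have ht2 : t ^ 2 = s⁻¹ := by
        rw [ht, ← Real.sqrt_inv]
        exact Real.sq_sqrt (by positivity)
      have htS : t • y ∈ Sph := by
        show ∑ i, (t • y) i ^ 2 = 1
        rw [hNhom, ht2]
        field_simp
        rfl
      have h1 : lam ≤ Qf A d (t • y) := hvmin htS
      rw [hQhom, ht2] at h1
      have h2 := mul_le_mul_of_nonneg_left h1 (le_of_lt hspos)
      calc lam * s = s * lam := by ring
        _ ≤ s * (s⁻¹ * Qf A d y) := h2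
        _ = Qf A d y := by field_simp
  -- lam is nonpositive
  have hlamle : lam ≤ 0 := by
    have h1 := hglobal x₀
    have h2 : 0 < ∑ i, x₀ i ^ 2 := by
      have hnz : ∃ i, x₀ i ≠ 0 := by
        by_contra h
        push_neg at h
        exact hx₀ne (funext h)
      obtain ⟨i1, hi1⟩ := hnz
      have : (0:ℝ) < x₀ i1 ^ 2 := by positivity
      have hle : x₀ i1 ^ 2 ≤ ∑ i, x₀ i ^ 2 :=
        Finset.single_le_sum (fun i _ => sq_nonneg (x₀ i)) (Finset.mem_univ i1)
      linarith
    nlinarith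
  -- pass to absolute values
  set u : Fin n → ℝ := fun i => |v i| with hu
  have hvSph : ∑ i, v i ^ 2 = 1 := hvS
  have huSph : ∑ i, u i ^ 2 = 1 := by
    rw [← hvSph]
    exact Finset.sum_congr rfl fun i _ => by rw [hu]; simp [sq_abs]
  have huS : u ∈ Sph := huSph
  have hQu : Qf A d u ≤ lam := by
    rw [hlam, Qf, Qf]
    apply Finset.sum_le_sum
    intro i _
    apply Finset.sum_le_sum
    intro j _
    by_cases hij : i = j
    · subst hij
      simp only [hu]
      apply le_of_eq
      have h : |v i| * |v i| = v i * v i := abs_mul_abs_self _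
      calc ((d i : ℝ) * (A i i : ℝ)) * |v i| * |v i|
          = ((d i : ℝ) * (A i i : ℝ)) * (|v i| * |v i|) := by ring
        _ = ((d i : ℝ) * (A i i : ℝ)) * (v i * v i) := by rw [h]
        _ = ((d i : ℝ) * (A i i : ℝ)) * v i * v i := by ring
    · have hSij : (d i : ℝ) * (A i j : ℝ) ≤ 0 := by
        have h1 : A i j ≤ 0 := hoff i j hij
        have h2 : (0:ℝ) < d i := by exact_mod_cast hd i
        have h3 : (A i j : ℝ) ≤ 0 := by exact_mod_cast h1
        nlinarith
      have habs : v i * v j ≤ |v i| * |v j| := by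
        calc v i * v j ≤ |v i * v j| := le_abs_self _
          _ = |v i| * |v j| := abs_mul _ _
      rw [hu]
      simp only
      nlinarith
  have hQu' : lam ≤ Qf A d u := by
    have := hglobal u
    rw [huSph, mul_one] at this
    exact this
  have hQueq : Qf A d u = lam := le_antisymm hQu hQu'
  -- u is an eigenvector: B(u, e_k) = lam * u k
  have hBexp : ∀ (x y : Fin n → ℝ) (t : ℝ),
      Qf A d (x + t • y) = Qf A d x + t * Bf A d x y + t * Bf A d y x + t^2 * Qf A d y := by
    intro x y t
    rw [Qf, Qf, Qf, Bf, Bf]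
    rw [Finset.mul_sum, Finset.mul_sum, Finset.mul_sum, ← Finset.sum_add_distrib,
      ← Finset.sum_add_distrib, ← Finset.sum_add_distrib]
    apply Finset.sum_congr rfl
    intro i _
    rw [Finset.mul_sum, Finset.mul_sum, Finset.mul_sum, ← Finset.sum_add_distrib,
      ← Finset.sum_add_distrib, ← Finset.sum_add_distrib]
    apply Finset.sum_congr rfl
    intro j _
    simp only [Pi.add_apply, Pi.smul_apply, smul_eq_mul]
    ring
  have hNexp : ∀ (x y : Fin n → ℝ) (t : ℝ),
      (∑ i, (x + t • y) i ^ 2)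
        = (∑ i, x i ^ 2) + t * (2 * ∑ i, x i * y i) + t^2 * (∑ i, y i ^ 2) := by
    intro x y t
    rw [Finset.mul_sum, Finset.mul_sum, Finset.mul_sum, ← Finset.sum_add_distrib,
      ← Finset.sum_add_distrib]
    apply Finset.sum_congr rfl
    intro i _
    simp only [Pi.add_apply, Pi.smul_apply, smul_eq_mul]
    ring
  have hBsymm : ∀ x y : Fin n → ℝ, Bf A d x y = Bf A d y x := by
    intro x y
    rw [Bf, Bf, Finset.sum_comm]
    apply Finset.sum_congr rfl
    intro i _
    apply Finset.sum_congr rfl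
    intro j _
    rw [hS j i]
    ring
  have heig : ∀ y : Fin n → ℝ, Bf A d u y = lam * ∑ i, u i * y i := by
    intro y
    have hkey : ∀ t : ℝ, 0 ≤ (2 * (Bf A d u y - lam * ∑ i, u i * y i)) * t
        + (Qf A d y - lam * ∑ i, y i ^ 2) * t ^ 2 := by
      intro t
      have h1 := hglobal (u + t • y)
      rw [hBexp, hNexp, hBsymm y u] at h1
      rw [hQueq] at h1
      rw [huSph] at h1
      nlinarith
    have := quad_zero_of_nonneg _ _ hkey
    linarith
  -- eigen equation componentwise
  have hcomp : ∀ k, (d k : ℝ) * Ar A k u = lam * u k := by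
    intro k
    have h1 := heig (ev k)
    have h2 : Bf A d u (ev k) = (d k : ℝ) * Ar A k u := by
      rw [Bf, Ar]
      rw [Finset.mul_sum]
      rw [Finset.sum_comm]
      rw [Finset.sum_eq_single k]
      · apply Finset.sum_congr rfl
        intro i _
        rw [hS i k]
        simp [ev]
        ring
      · intro b _ hb
        apply Finset.sum_eq_zero
        intro i _
        simp [ev, Pi.single_apply, hb]
      · simp
    have h3 : (∑ i, u i * ev k i) = u k := by
      rw [Finset.sum_eq_single k]
      · simp [ev]
      · intro b _ hb; simp [ev, Pi.single_apply, hb]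
      · simp
    rw [h2, h3] at h1
    exact h1
  -- nonnegativity and strict positivity via connectivity
  have hunn : ∀ k, 0 ≤ u k := fun k => abs_nonneg _
  have hprop : ∀ k l, A k l ≠ 0 → k ≠ l → u k = 0 → u l = 0 := by
    intro k l hA hkl hk
    have h1 := hcomp k
    rw [hk, mul_zero] at h1
    -- (d k) * ∑_i A k i u i = 0, all terms ≤ 0 except i = k which is 0
    have hdk : (0:ℝ) < (d k : ℝ) := by exact_mod_cast hd k
    have h2 : Ar A k u = 0 := by
      rcases mul_eq_zero.mp h1 with h | h
      · linarith
      · exact h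
    rw [Ar] at h2
    have hterms : ∀ i ∈ Finset.univ, (A k i : ℝ) * u i ≤ 0 := by
      intro i _
      by_cases hik : k = i
      · subst hik; rw [hk, mul_zero]
      · have := hoff k i hik
        have hAle : ((A k i : ℤ) : ℝ) ≤ 0 := by exact_mod_cast this
        exact mul_nonpos_of_nonpos_of_nonneg hAle (hunn i)
    have hzero := (Finset.sum_eq_zero_iff_of_nonpos hterms).mp h2 l (Finset.mem_univ l)
    have hAl : ((A k l : ℤ) : ℝ) ≠ 0 := by exact_mod_cast hA
    rcases mul_eq_zero.mp hzero with h | h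
    · exact absurd h hAl
    · exact h
  have hupos : ∀ k, 0 < u k := by
    by_contra h
    push_neg at h
    obtain ⟨k₁, hk₁⟩ := h
    have hk₁0 : u k₁ = 0 := le_antisymm hk₁ (hunn k₁)
    -- propagate along the graph
    have hAsym0 : ∀ a b : Fin n, A a b = 0 → A b a = 0 := by
      intro a b h
      have h1 := hsym a b
      rw [h, mul_zero] at h1
      have h2 := hd b
      exact (mul_eq_zero.mp h1.symm).resolve_left (by omega)
    have hwalk : ∀ (a l : Fin n)
        (_ : (SimpleGraph.fromRel (fun i j : Fin n => A i j ≠ 0)).Walk a l),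
        u a = 0 → u l = 0 := by
      intro a l p
      induction p with
      | nil => exact id
      | @cons a' b' c' hadj p ih =>
        intro ha
        obtain ⟨hne, hor⟩ := (SimpleGraph.fromRel_adj _ a' b').mp hadj
        have hAab : A a' b' ≠ 0 := by
          rcases hor with h | h
          · exact h
          · intro h0
            exact h (hAsym0 a' b' h0)
        exact ih (hprop a' b' hAab hne ha)
    have hall : ∀ l, u l = 0 := by
      intro l
      obtain ⟨p⟩ := (hind.preconnected k₁ l)
      exact hwalk k₁ l p hk₁0
    have : (1:ℝ) = 0 := by
      rw [← huSph]
      rw [Finset.sum_eq_zero]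
      intro i _
      rw [hall i]
      ring
    norm_num at this
  exact ⟨u, hupos, fun k => by
    have h1 := hcomp k
    have hdk : (0:ℝ) < (d k : ℝ) := by exact_mod_cast hd k
    have h2 : lam * u k ≤ 0 := mul_nonpos_of_nonpos_of_nonneg hlamle (hunn k)
    nlinarith⟩

end Vinberg

/-! ### Bipartite blocks and linear functionals -/

section Blocks

variable {ε : Fin n → ℤˣ} {d : Fin n → ℤ} {u : Fin n → ℝ}

lemma units_ne_neg (δ : ℤˣ) : δ ≠ -δ := by
  rcases Int.units_eq_one_or δ with h | h <;> rw [h] <;> decide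

/-- same-sign entries vanish -/
lemma same_sign_zero (hoff : ∀ i j, i ≠ j → A i j ≤ 0)
    (hbip : ∀ i j, A i j < 0 → ε i = -ε j) (k l : Fin n)
    (hsame : ε k = ε l) (hne : k ≠ l) : A k l = 0 := by
  rcases lt_or_eq_of_le (hoff k l hne) with h | h
  · exfalso
    have := hbip k l h
    rw [hsame] at this
    exact units_ne_neg (ε l) this
  · exact h

/-- a product of same-sign reflections fixes a same-sign basis vector not in the list -/
lemma fix_ev (hoff : ∀ i j, i ≠ j → A i j ≤ 0)
    (hbip : ∀ i j, A i j < 0 → ε i = -ε j) (k : Fin n) (l : List (Fin n))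
    (hl : ∀ x ∈ l, ε x = ε k) (hnk : k ∉ l) :
    ((l.map (sig A)).prod) (ev k) = ev k := by
  induction l with
  | nil => simp
  | cons i t ih =>
    rw [List.map_cons, List.prod_cons, Module.End.mul_apply]
    rw [ih (fun x hx => hl x (List.mem_cons_of_mem i hx)) (fun h => hnk (List.mem_cons_of_mem i h))]
    rw [sig_apply, Ar_ev]
    have hik : i ≠ k := by
      intro h
      exact hnk (h ▸ List.mem_cons_self (a := i) (l := t))
    have : A i k = 0 := same_sign_zero hoff hbip i k
      (by rw [hl i (List.mem_cons_self (a := i) (l := t))]) hik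
    rw [this]
    push_cast
    module

/-- action of a same-sign block on a general vector -/
lemma block_apply (hoff : ∀ i j, i ≠ j → A i j ≤ 0)
    (hbip : ∀ i j, A i j < 0 → ε i = -ε j) (δ : ℤˣ) (l : List (Fin n))
    (hnd : l.Nodup) (hl : ∀ x ∈ l, ε x = δ) (x : Fin n → ℝ) :
    ∀ m : Fin n, ((l.map (sig A)).prod) x m = if m ∈ l then x m - Ar A m x else x m := by
  induction l with
  | nil => simp
  | cons i t ih =>
    intro m
    rw [List.map_cons, List.prod_cons, Module.End.mul_apply]
    have hnd' : t.Nodup := (List.nodup_cons.mp hnd).2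
    have hit : i ∉ t := (List.nodup_cons.mp hnd).1
    have hl' : ∀ x ∈ t, ε x = δ := fun x hx => hl x (List.mem_cons_of_mem i hx)
    set y := ((t.map (sig A)).prod) x with hy
    have hyval : ∀ m, y m = if m ∈ t then x m - Ar A m x else x m := ih hnd' hl'
    have hAr : Ar A i y = Ar A i x := by
      rw [Ar, Ar]
      apply Finset.sum_congr rfl
      intro j _
      by_cases hjt : j ∈ t
      · have hji : j ≠ i := fun h => hit (h ▸ hjt)
        have : A i j = 0 := same_sign_zero hoff hbip i j
          (by rw [hl i (List.mem_cons_self (a := i) (l := t)), hl' j hjt]) (fun h => hji h.symm)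
        rw [this]
        push_cast
        ring
      · rw [hyval j, if_neg hjt]
    rw [sig_apply, hAr]
    show y m - Ar A i x * ev i m = _
    by_cases hmi : m = i
    · subst hmi
      rw [hyval m, if_neg hit, if_pos (List.mem_cons_self (a := m) (l := t))]
      simp [ev]
    · rw [hyval m]
      have : ev i m = 0 := by simp [ev, Pi.single_apply, Ne.symm hmi]
      rw [this, mul_zero, sub_zero]
      by_cases hmt : m ∈ t
      · rw [if_pos hmt, if_pos (List.mem_cons_of_mem i hmt)]
      · rw [if_neg hmt, if_neg (by simp [hmi, hmt])]

/-- signed linear functional -/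
def Gf (ε : Fin n → ℤˣ) (d : Fin n → ℤ) (u : Fin n → ℝ) (δ : ℤˣ) (x : Fin n → ℝ) : ℝ :=
  ∑ k, if ε k = δ then (d k : ℝ) * u k * x k else 0

/-- bonus functional -/
def Ff (A : Matrix (Fin n) (Fin n) ℤ) (ε : Fin n → ℤˣ) (d : Fin n → ℤ) (u : Fin n → ℝ)
    (δ : ℤˣ) (x : Fin n → ℝ) : ℝ :=
  ∑ k, if ε k = δ then (d k : ℝ) * (2 * u k - Ar A k u) * x k else 0

/-- the opposite-sign block leaves `Gf δ` unchanged -/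
lemma Gf_invariant (hoff : ∀ i j, i ≠ j → A i j ≤ 0)
    (hbip : ∀ i j, A i j < 0 → ε i = -ε j) (δ : ℤˣ) (l : List (Fin n)) (hnd : l.Nodup)
    (hl : ∀ x ∈ l, ε x = -δ) (x : Fin n → ℝ) :
    Gf ε d u δ (((l.map (sig A)).prod) x) = Gf ε d u δ x := by
  rw [Gf, Gf]
  apply Finset.sum_congr rfl
  intro k _
  by_cases hk : ε k = δ
  · rw [if_pos hk, if_pos hk]
    have hknl : k ∉ l := by
      intro h
      have := hl k h
      rw [hk] at this
      exact units_ne_neg δ this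
    rw [block_apply hoff hbip (-δ) l hnd hl x k, if_neg hknl]
  · rw [if_neg hk, if_neg hk]

/-- key identity: `Gf δ (T_δ x) = - Gf δ x + Ff (-δ) x`. -/
lemma Gf_block (hdiag : ∀ i, A i i = 2) (hoff : ∀ i j, i ≠ j → A i j ≤ 0)
    (hbip : ∀ i j, A i j < 0 → ε i = -ε j)
    (hd : ∀ i, 0 < d i) (hsym : ∀ i j, d i * A i j = d j * A j i)
    (δ : ℤˣ) (l : List (Fin n)) (hnd : l.Nodup)
    (hmem : ∀ k, k ∈ l ↔ ε k = δ) (x : Fin n → ℝ) :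
    Gf ε d u δ (((l.map (sig A)).prod) x)
      = - Gf ε d u δ x + Ff A ε d u (-δ) x := by
  have hl : ∀ y ∈ l, ε y = δ := fun y hy => (hmem y).mp hy
  have h1 : Gf ε d u δ (((l.map (sig A)).prod) x)
      = Gf ε d u δ x - ∑ k, (if ε k = δ then (d k : ℝ) * u k * Ar A k x else 0) := by
    rw [Gf, Gf, ← Finset.sum_sub_distrib]
    apply Finset.sum_congr rfl
    intro k _
    by_cases hk : ε k = δ
    · rw [if_pos hk, if_pos hk, if_pos hk]
      rw [block_apply hoff hbip δ l hnd hl x k, if_pos ((hmem k).mpr hk)]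
      ring
    · rw [if_neg hk, if_neg hk, if_neg hk]
      ring
  rw [h1]
  have h2 : ∑ k, (if ε k = δ then (d k : ℝ) * u k * Ar A k x else 0)
      = 2 * Gf ε d u δ x - Ff A ε d u (-δ) x := by
    have hexp : ∀ k, (if ε k = δ then (d k : ℝ) * u k * Ar A k x else 0)
        = ∑ j, (if ε k = δ then (d k : ℝ) * u k * (A k j : ℝ) * x j else 0) := by
      intro k
      by_cases hk : ε k = δ
      · rw [if_pos hk, Ar, Finset.mul_sum]
        apply Finset.sum_congr rfl
        intro j _
        rw [if_pos hk]
        ring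
      · rw [if_neg hk]
        rw [Finset.sum_eq_zero]
        intro j _
        rw [if_neg hk]
    rw [Finset.sum_congr rfl (fun k _ => hexp k)]
    rw [Finset.sum_comm]
    -- now inner sum over k for each j
    have hinner : ∀ j, ∑ k, (if ε k = δ then (d k : ℝ) * u k * (A k j : ℝ) * x j else 0)
        = (if ε j = δ then 2 * (d j : ℝ) * u j * x j
           else (d j : ℝ) * (Ar A j u - 2 * u j) * x j) := by
      intro j
      have hsymR : ∀ k, (d k : ℝ) * (A k j : ℝ) = (d j : ℝ) * (A j k : ℝ) := by
        intro k
        exact_mod_cast congrArg (fun z : ℤ => (z : ℝ)) (hsym k j)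
      by_cases hj : ε j = δ
      · rw [if_pos hj]
        rw [Finset.sum_eq_single j]
        · rw [if_pos hj, hdiag j]
          push_cast
          ring
        · intro b _ hb
          by_cases hbδ : ε b = δ
          · rw [if_pos hbδ]
            have : A b j = 0 := same_sign_zero hoff hbip b j (by rw [hbδ, hj]) hb
            rw [this]
            push_cast
            ring
          · rw [if_neg hbδ]
        · simp
      · rw [if_neg hj]
        -- ∑_{ε k = δ} d_k u_k A k j x j = d_j (Ar A j u - 2 u_j) x j
        have step1 : ∑ k, (if ε k = δ then (d k : ℝ) * u k * (A k j : ℝ) * x j else 0)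
            = (∑ k, (if ε k = δ then (A j k : ℝ) * u k else 0)) * ((d j : ℝ) * x j) := by
          rw [Finset.sum_mul]
          apply Finset.sum_congr rfl
          intro k _
          by_cases hk : ε k = δ
          · rw [if_pos hk, if_pos hk]
            linear_combination (u k * x j) * hsymR k
          · rw [if_neg hk, if_neg hk, zero_mul]
        rw [step1]
        have step2 : ∑ k, (if ε k = δ then (A j k : ℝ) * u k else 0)
            = Ar A j u - ∑ k, (if ε k = δ then (0:ℝ) else (A j k : ℝ) * u k) := by
          rw [Ar, ← Finset.sum_sub_distrib]
          apply Finset.sum_congr rfl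
          intro k _
          by_cases hk : ε k = δ
          · rw [if_pos hk, if_pos hk]
            ring
          · rw [if_neg hk, if_neg hk]
            ring
        have step3 : ∑ k, (if ε k = δ then (0:ℝ) else (A j k : ℝ) * u k) = 2 * u j := by
          rw [Finset.sum_eq_single j]
          · rw [if_neg hj, hdiag j]
            push_cast
            ring
          · intro b _ hb
            by_cases hbδ : ε b = δ
            · rw [if_pos hbδ]
            · rw [if_neg hbδ]
              have hεb : ε b = ε j := by
                rcases Int.units_eq_one_or (ε b) with h1 | h1 <;>
                  rcases Int.units_eq_one_or (ε j) with h2 | h2 <;>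
                    rcases Int.units_eq_one_or δ with h3 | h3 <;>
                      simp_all
              have : A j b = 0 := same_sign_zero hoff hbip j b (hεb.symm) (Ne.symm hb)
              rw [this]
              push_cast
              ring
          · simp
        rw [step2, step3]
        ring
    rw [Finset.sum_congr rfl (fun j _ => hinner j)]
    rw [Gf, Ff, Finset.mul_sum, ← Finset.sum_sub_distrib]
    apply Finset.sum_congr rfl
    intro j _
    by_cases hj : ε j = δ
    · rw [if_pos hj, if_pos hj]
      have hjneg : ¬ (ε j = -δ) := by
        rw [hj]
        exact units_ne_neg δ
      rw [if_neg hjneg]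
      ring
    · rw [if_neg hj, if_neg hj]
      have hjneg : ε j = -δ := by
        rcases Int.units_eq_one_or (ε j) with h1 | h1 <;>
          rcases Int.units_eq_one_or δ with h2 | h2 <;>
            simp_all
      rw [if_pos hjneg]
      ring
  rw [h2]
  ring

/-- the bonus functional dominates twice the plain one on sign-nonnegative vectors -/
lemma Ff_ge (hd : ∀ i, 0 < d i) (hu : ∀ k, 0 < u k) (hAu : ∀ k, Ar A k u ≤ 0)
    (δ : ℤˣ) (x : Fin n → ℝ) (hx : ∀ k, ε k = δ → 0 ≤ x k) :
    2 * Gf ε d u δ x ≤ Ff A ε d u δ x := by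
  rw [Gf, Ff, Finset.mul_sum]
  apply Finset.sum_le_sum
  intro k _
  by_cases hk : ε k = δ
  · rw [if_pos hk, if_pos hk]
    have h1 : (0:ℝ) < (d k : ℝ) := by exact_mod_cast hd k
    have h2 := hu k
    have h3 := hAu k
    have h4 := hx k hk
    nlinarith [mul_nonneg (mul_nonneg h1.le (neg_nonneg.2 h3)) h4]
  · rw [if_neg hk, if_neg hk]
    simp

/-- `Gf δ` is nonpositive on nonpositive vectors -/
lemma Gf_nonpos (hd : ∀ i, 0 < d i) (hu : ∀ k, 0 < u k) (δ : ℤˣ) (x : Fin n → ℝ)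
    (hx : ∀ k, x k ≤ 0) : Gf ε d u δ x ≤ 0 := by
  rw [Gf]
  apply Finset.sum_nonpos
  intro k _
  by_cases hk : ε k = δ
  · rw [if_pos hk]
    have h1 : (0:ℝ) < (d k : ℝ) := by exact_mod_cast hd k
    have h2 := hu k
    have h3 := hx k
    nlinarith [mul_nonneg (mul_nonneg h1.le h2.le) (neg_nonneg.2 h3)]
  · rw [if_neg hk]

/-- value of `Gf` on a basis vector -/
lemma Gf_ev (δ : ℤˣ) (k : Fin n) :
    Gf ε d u δ (ev k) = if ε k = δ then (d k : ℝ) * u k else 0 := by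
  rw [Gf, Finset.sum_eq_single k]
  · by_cases hk : ε k = δ
    · rw [if_pos hk, if_pos hk]
      simp [ev]
    · rw [if_neg hk, if_neg hk]
  · intro b _ hb
    by_cases hbδ : ε b = δ
    · rw [if_pos hbδ]
      simp [ev, Pi.single_apply, hb]
    · rw [if_neg hbδ]
  · simp

/-- value of `Ff` on a basis vector -/
lemma Ff_ev (δ : ℤˣ) (k : Fin n) :
    Ff A ε d u δ (ev k) = if ε k = δ then (d k : ℝ) * (2 * u k - Ar A k u) else 0 := by
  rw [Ff, Finset.sum_eq_single k]
  · by_cases hk : ε k = δ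
    · rw [if_pos hk, if_pos hk]
      simp [ev]
    · rw [if_neg hk, if_neg hk]
  · intro b _ hb
    by_cases hbδ : ε b = δ
    · rw [if_pos hbδ]
      simp [ev, Pi.single_apply, hb]
    · rw [if_neg hbδ]
  · simp

end Blocks

/-! ### The scalar Chebyshev chain -/

section Chain

variable {ε : Fin n → ℤˣ} {d : Fin n → ℤ} {u : Fin n → ℝ}

lemma chainS (P S : (Fin n → ℝ) → ℝ) (T : Module.End ℝ (Fin n → ℝ))
    (hstepS : ∀ x : Fin n → ℝ, (∀ m, 0 ≤ x m) → 2 * P x - S x ≤ S (T x))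
    (hstepP : ∀ x : Fin n → ℝ, (∀ m, 0 ≤ (T x) m) → 2 * S (T x) - P x ≤ P (T x))
    (F : ℕ) (hF : 1 ≤ F) (v : Fin n → ℝ) (hP : 0 < P v) (hS0 : 0 ≤ S v) (hSP : S v ≤ P v)
    (hroots : ∀ q < F, ∀ m, 0 ≤ ((T^q) v) m) : 0 < S ((T^F) v) := by
  have hTpow : ∀ q : ℕ, T ((T^q) v) = (T^(q+1)) v := by
    intro q
    rw [pow_succ']
    exact (Module.End.mul_apply _ _ _).symm
  have KK : ∀ q, q < F → 0 < P ((T^q) v) ∧ 0 ≤ S ((T^q) v) ∧ S ((T^q) v) ≤ P ((T^q) v) := by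
    intro q
    induction q with
    | zero =>
      intro _
      simp only [pow_zero, Module.End.one_apply]
      exact ⟨hP, hS0, hSP⟩
    | succ q ih =>
      intro hq1
      obtain ⟨p1, p2, p3⟩ := ih (by omega)
      have hx := hroots q (by omega)
      have hs := hstepS _ hx
      have hp := hstepP ((T^q) v) (by rw [hTpow]; exact hroots (q+1) hq1)
      rw [hTpow] at hs hp
      exact ⟨by linarith, by linarith, by linarith⟩
  obtain ⟨p1, p2, p3⟩ := KK (F-1) (by omega)
  have hx := hroots (F-1) (by omega)
  have hs := hstepS _ hx
  rw [hTpow] at hs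
  have hF' : F - 1 + 1 = F := by omega
  rw [hF'] at hs
  linarith

variable {M : CoxeterMatrix (Fin n)} {W : Type} [Group W]

/-- One pass over a same-sign block of the bipartite word. -/
lemma pass (cs : CoxeterSystem M W) (ρ : W →* Module.End ℝ (Fin n → ℝ))
    (hoff : ∀ i j, i ≠ j → A i j ≤ 0) (hbip : ∀ i j, A i j < 0 → ε i = -ε j)
    (hd : ∀ i, 0 < d i) (hu : ∀ k, 0 < u k)
    (hdich : ∀ (N : ℕ) (w : W), cs.length w = N → ∀ i : Fin n,
      (cs.length (w * cs.simple i) = N + 1 → ∀ m, 0 ≤ ρ w (ev i) m) ∧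
      (cs.length (w * cs.simple i) + 1 = N → ∀ m, ρ w (ev i) m ≤ 0))
    (hrho' : ∀ l : List (Fin n), ρ (cs.wordProd l) = (l.map (sig A)).prod)
    (T C : Module.End ℝ (Fin n → ℝ)) (q : ℕ)
    (hstepS : ∀ x : Fin n → ℝ, (∀ m, 0 ≤ x m) →
      2 * Gf ε d u 1 x - Gf ε d u (-1) x ≤ Gf ε d u (-1) (T x))
    (hstepP : ∀ x : Fin n → ℝ, (∀ m, 0 ≤ (T x) m) →
      2 * Gf ε d u (-1) (T x) - Gf ε d u 1 x ≤ Gf ε d u 1 (T x))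
    (δ : ℤˣ) (L : List (Fin n)) (hnd : L.Nodup) (hsign : ∀ x ∈ L, ε x = δ)
    (w0 : W) (N0 : ℕ) (hrho0 : ρ w0 = (T^q : Module.End ℝ (Fin n → ℝ)) * C)
    (hbase : ∀ k ∈ L, 0 < Gf ε d u 1 (C (ev k)) ∧ 0 ≤ Gf ε d u (-1) (C (ev k)) ∧
      Gf ε d u (-1) (C (ev k)) ≤ Gf ε d u 1 (C (ev k)) ∧ 0 < (C (ev k)) k)
    (hroots : ∀ q' < q, ∀ k ∈ L, ∀ m, 0 ≤ ((T^q') (C (ev k))) m) :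
    ∀ (l2 l1 : List (Fin n)), l1 ++ l2 = L →
      cs.length (w0 * cs.wordProd l1) = N0 + l1.length →
      (cs.length (w0 * cs.wordProd L) = N0 + L.length ∧
        ∀ k ∈ l2, ∀ m, 0 ≤ ((T^q) (C (ev k))) m) := by
  intro l2
  induction l2 with
  | nil =>
    intro l1 happ hlen
    rw [List.append_nil] at happ
    subst happ
    exact ⟨hlen, fun k hk => absurd hk (List.not_mem_nil)⟩
  | cons k l2' ih =>
    intro l1 happ hlen
    have hkL : k ∈ L := by rw [← happ]; exact List.mem_append_right l1 (List.mem_cons_self (a := k) (l := l2'))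
    have hl1L : ∀ x ∈ l1, x ∈ L := fun x hx => by rw [← happ]; exact List.mem_append_left _ hx
    have hknl1 : k ∉ l1 := by
      intro hk
      have h2 : ¬ (l1 ++ k :: l2').Nodup := by
        intro hn
        rw [List.nodup_append] at hn
        exact hn.2.2 k hk k (List.mem_cons_self (a := k) (l := l2')) rfl
      rw [happ] at h2
      exact h2 hnd
    set w1 := w0 * cs.wordProd l1 with hw1
    -- the root at this position
    have hroot : ρ w1 (ev k) = (T^q) (C (ev k)) := by
      rw [hw1, map_mul, Module.End.mul_apply, hrho' l1]
      rw [fix_ev hoff hbip k l1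
        (fun x hx => by rw [hsign x (hl1L x hx), hsign k hkL]) hknl1]
      rw [hrho0, Module.End.mul_apply]
    -- the next step is an ascent
    have hasc : cs.length (w1 * cs.simple k) = (N0 + l1.length) + 1 := by
      rcases cs.length_mul_simple w1 k with h | h
      · rw [h, hlen]
      · exfalso
        -- descent: the root would be nonpositive
        have hneg : ∀ m, ρ w1 (ev k) m ≤ 0 :=
          (hdich (N0 + l1.length) w1 hlen k).2 (by omega)
        rw [hroot] at hneg
        obtain ⟨hb1, hb2, hb3, hb4⟩ := hbase k hkL
        rcases Nat.eq_zero_or_pos q with hq | hq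
        · subst hq
          have := hneg k
          simp only [pow_zero, Module.End.one_apply] at this
          linarith
        · have hpos := chainS (Gf ε d u 1) (Gf ε d u (-1)) T hstepS hstepP q hq
            (C (ev k)) hb1 hb2 hb3 (fun q' hq' m => hroots q' hq' k hkL m)
          have hnp := Gf_nonpos (ε := ε) (u := u) hd hu (-1) ((T^q) (C (ev k))) hneg
          linarith
    -- record nonnegativity of this root
    have hpos : ∀ m, 0 ≤ ((T^q) (C (ev k))) m := by
      have := (hdich (N0 + l1.length) w1 hlen k).1 hasc
      intro m
      have h2 := this m
      rwa [hroot] at h2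
    -- recurse
    have hstep : cs.length (w0 * cs.wordProd (l1 ++ [k])) = N0 + (l1 ++ [k]).length := by
      rw [cs.wordProd_append, cs.wordProd_singleton, ← mul_assoc, ← hw1]
      rw [List.length_append, List.length_singleton]
      rw [hasc]
      omega
    have happ' : (l1 ++ [k]) ++ l2' = L := by
      rw [List.append_assoc, List.singleton_append]
      exact happ
    obtain ⟨hfin, hrest⟩ := ih (l1 ++ [k]) happ' hstep
    refine ⟨hfin, ?_⟩
    intro k' hk' m
    rcases List.mem_cons.mp hk' with h | h
    · subst h; exact hpos m
    · exact hrest k' h m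

end Chain

end Stmt14

/-- Let `A` be an indecomposable symmetrizable generalized Cartan
matrix of infinite type with bipartite Coxeter graph, and let `(W, s₁,…,sₙ)` be the
Coxeter system of the Coxeter matrix of `A`. Then `ℓ((t₊t₋)^r) = r·n` for all
`r ≥ 0`, where `t₊ = ∏_{ε(k)=1} s_k` and `t₋ = ∏_{ε(k)=−1} s_k`. -/


theorem length_coxeter_element_power (n : ℕ)
    (A : Matrix (Fin n) (Fin n) ℤ)
    (hdiag : ∀ i, A i i = 2) (hoff : ∀ i j, i ≠ j → A i j ≤ 0)
    (d : Fin n → ℤ) (hd : ∀ i, 0 < d i)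
    (hsym : ∀ i j, d i * A i j = d j * A j i)
    (ε : Fin n → ℤˣ) (hbip : ∀ i j, A i j < 0 → ε i = -ε j)
    (hind : (SimpleGraph.fromRel (fun i j => A i j ≠ 0)).Connected)
    (hinf : ¬ ∀ x : Fin n → ℚ, x ≠ 0 →
      0 < ∑ i, ∑ j, ((d i * A i j : ℤ) : ℚ) * x i * x j)
    (M : CoxeterMatrix (Fin n)) (hM : ∀ i j, M.M i j = coxEntry A i j)
    (W : Type) [Group W] (cs : CoxeterSystem M W) :
    ∀ r : ℕ,
      cs.length
        ((((Lsgn n ε 1).map cs.simple).prod * ((Lsgn n ε (-1)).map cs.simple).prod) ^ r)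
        = r * n := by

  classical
  intro r
  have hM' : ∀ i j, M.M i j = (if i = j then 1
      else if A i j * A j i = 0 then 2
      else if A i j * A j i = 1 then 3
      else if A i j * A j i = 2 then 4
      else if A i j * A j i = 3 then 6
      else 0) := by
    intro i j
    rw [hM i j]
    rfl
  set Lp := Lsgn n ε 1 with hLpdef
  set Lm := Lsgn n ε (-1) with hLmdef
  have hLpnd : Lp.Nodup := (List.nodup_finRange n).filter _
  have hLmnd : Lm.Nodup := (List.nodup_finRange n).filter _
  have hLpmem : ∀ k, k ∈ Lp ↔ ε k = 1 := by
    intro k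
    rw [hLpdef]
    unfold Lsgn
    rw [List.mem_filter]
    simp [List.mem_finRange]
  have hLmmem : ∀ k, k ∈ Lm ↔ ε k = (-1 : ℤˣ) := by
    intro k
    rw [hLmdef]
    unfold Lsgn
    rw [List.mem_filter]
    simp [List.mem_finRange]
  have hlen : Lp.length + Lm.length = n := by
    have key : ∀ l : List (Fin n),
        (l.filter (fun k => ε k = (1:ℤˣ))).length
          + (l.filter (fun k => ε k = (-1:ℤˣ))).length = l.length := by
      intro l
      induction l with
      | nil => simp
      | cons a t ih =>
        rcases Int.units_eq_one_or (ε a) with h | h <;>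
          simp [List.filter_cons, h, ih] <;> omega
    have := key (List.finRange n)
    rw [List.length_finRange] at this
    rw [hLpdef, hLmdef]
    unfold Lsgn
    exact this
  -- the geometric representation
  have hlift := Stmt14.isLiftable (A := A) (M := M) hdiag hoff d hd hsym hM'
  set ρ := cs.lift ⟨fun i => Stmt14.sig A i, hlift⟩ with hρdef
  have hρ : ∀ i, ρ (cs.simple i) = Stmt14.sig A i := fun i => cs.lift_apply_simple hlift i
  have hrho' : ∀ l : List (Fin n), ρ (cs.wordProd l) = (l.map (Stmt14.sig A)).prod := by
    intro l
    induction l with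
    | nil => rw [cs.wordProd_nil, map_one, List.map_nil, List.prod_nil]
    | cons i t ih => rw [cs.wordProd_cons, map_mul, hρ i, List.map_cons, List.prod_cons, ih]
  have hdich := Stmt14.dichotomy cs ρ hdiag hoff hM' hρ
  obtain ⟨u, hu, hAu⟩ := Stmt14.vinberg hoff hd hsym hind hinf
  set Tp : Module.End ℝ (Fin n → ℝ) := (Lp.map (Stmt14.sig A)).prod with hTpdef
  set Tm : Module.End ℝ (Fin n → ℝ) := (Lm.map (Stmt14.sig A)).prod with hTmdef
  set T : Module.End ℝ (Fin n → ℝ) := Tp * Tm with hTdef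
  have hsignLp : ∀ x ∈ Lp, ε x = 1 := fun x hx => (hLpmem x).mp hx
  have hsignLm : ∀ x ∈ Lm, ε x = (-1 : ℤˣ) := fun x hx => (hLmmem x).mp hx
  have hsignLpneg : ∀ x ∈ Lp, ε x = -(-1 : ℤˣ) := by
    intro x hx
    rw [hsignLp x hx]
    rfl
  have hsignLmneg : ∀ x ∈ Lm, ε x = -(1 : ℤˣ) := by
    intro x hx
    rw [hsignLm x hx]
  have hone_ne : ¬ ((1 : ℤˣ) = -1) := by decide
  have hneg_ne : ¬ ((-1 : ℤˣ) = 1) := by decide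
  -- step inequalities
  have hstepS : ∀ x : Fin n → ℝ, (∀ m, 0 ≤ x m) →
      2 * Stmt14.Gf ε d u 1 x - Stmt14.Gf ε d u (-1) x ≤ Stmt14.Gf ε d u (-1) (T x) := by
    intro x hx
    rw [hTdef, Module.End.mul_apply]
    have h2 := Stmt14.Gf_invariant (d := d) (u := u) hoff hbip (-1) Lp hLpnd hsignLpneg (Tm x)
    have h3 := Stmt14.Gf_block (u := u) hdiag hoff hbip hd hsym (-1) Lm hLmnd hLmmem x
    rw [neg_neg] at h3
    have h4 := Stmt14.Ff_ge (ε := ε) hd hu hAu 1 x (fun k _ => hx k)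
    rw [← hTpdef] at h2
    rw [← hTmdef] at h3
    rw [h2, h3]
    linarith
  have hstepP : ∀ x : Fin n → ℝ, (∀ m, 0 ≤ (T x) m) →
      2 * Stmt14.Gf ε d u (-1) (T x) - Stmt14.Gf ε d u 1 x ≤ Stmt14.Gf ε d u 1 (T x) := by
    intro x hx
    rw [hTdef, Module.End.mul_apply] at hx ⊢
    have h2 := Stmt14.Gf_block (u := u) hdiag hoff hbip hd hsym 1 Lp hLpnd hLpmem (Tm x)
    have h3 := Stmt14.Gf_invariant (d := d) (u := u) hoff hbip 1 Lm hLmnd hsignLmneg x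
    have h4 := Stmt14.Gf_invariant (d := d) (u := u) hoff hbip (-1) Lp hLpnd hsignLpneg (Tm x)
    have h5 : ∀ k, ε k = (-1:ℤˣ) → 0 ≤ (Tm x) k := by
      intro k hk
      have h6 := hx k
      have h7 := Stmt14.block_apply (δ := (1:ℤˣ)) hoff hbip Lp hLpnd hsignLp (Tm x) k
      have hknLp : k ∉ Lp := by
        intro hmem
        rw [hLpmem k] at hmem
        rw [hmem] at hk
        exact hone_ne hk
      rw [if_neg hknLp] at h7
      rw [← hTpdef] at h7
      rw [h7] at h6
      exact h6
    have h8 := Stmt14.Ff_ge (ε := ε) hd hu hAu (-1) (Tm x) h5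
    rw [← hTpdef] at h2 h4
    rw [← hTmdef] at h3
    rw [h2, h3, h4]
    linarith
  -- base facts for blocks
  have hbaseP : ∀ k ∈ Lp,
      0 < Stmt14.Gf ε d u 1 ((1 : Module.End ℝ (Fin n → ℝ)) (Stmt14.ev k)) ∧
      0 ≤ Stmt14.Gf ε d u (-1) ((1 : Module.End ℝ (Fin n → ℝ)) (Stmt14.ev k)) ∧
      Stmt14.Gf ε d u (-1) ((1 : Module.End ℝ (Fin n → ℝ)) (Stmt14.ev k)) ≤
        Stmt14.Gf ε d u 1 ((1 : Module.End ℝ (Fin n → ℝ)) (Stmt14.ev k)) ∧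
      0 < ((1 : Module.End ℝ (Fin n → ℝ)) (Stmt14.ev k)) k := by
    intro k hk
    have hk1 : ε k = 1 := hsignLp k hk
    have hdk : (0:ℝ) < (d k : ℝ) := by exact_mod_cast hd k
    simp only [Module.End.one_apply]
    rw [Stmt14.Gf_ev, Stmt14.Gf_ev, if_pos hk1, if_neg (by rw [hk1]; exact hone_ne)]
    refine ⟨by nlinarith [hu k], le_refl 0, by nlinarith [hu k], ?_⟩
    show (0:ℝ) < Stmt14.ev k k
    simp [Stmt14.ev]
  have hbaseM : ∀ k ∈ Lm,
      0 < Stmt14.Gf ε d u 1 (Tp (Stmt14.ev k)) ∧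
      0 ≤ Stmt14.Gf ε d u (-1) (Tp (Stmt14.ev k)) ∧
      Stmt14.Gf ε d u (-1) (Tp (Stmt14.ev k)) ≤ Stmt14.Gf ε d u 1 (Tp (Stmt14.ev k)) ∧
      0 < (Tp (Stmt14.ev k)) k := by
    intro k hk
    have hk1 : ε k = (-1 : ℤˣ) := hsignLm k hk
    have hdk : (0:ℝ) < (d k : ℝ) := by exact_mod_cast hd k
    have hP1 := Stmt14.Gf_block (u := u) hdiag hoff hbip hd hsym 1 Lp hLpnd hLpmem (Stmt14.ev k)
    have hS1 := Stmt14.Gf_invariant (d := d) (u := u) hoff hbip (-1) Lp hLpnd hsignLpneg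
      (Stmt14.ev k)
    rw [Stmt14.Gf_ev, if_neg (by rw [hk1]; exact hneg_ne), Stmt14.Ff_ev, if_pos hk1] at hP1
    rw [Stmt14.Gf_ev, if_pos hk1] at hS1
    have hknLp : k ∉ Lp := by
      intro hmem
      rw [hLpmem k] at hmem
      rw [hmem] at hk1
      exact hone_ne hk1
    have hco := Stmt14.block_apply (δ := (1:ℤˣ)) hoff hbip Lp hLpnd hsignLp (Stmt14.ev k) k
    rw [if_neg hknLp] at hco
    rw [← hTpdef] at hP1 hS1 hco
    rw [hP1, hS1, hco]
    have hAuk := hAu k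
    have huk := hu k
    refine ⟨by nlinarith, by nlinarith, by nlinarith, ?_⟩
    show (0:ℝ) < Stmt14.ev k k
    simp [Stmt14.ev]
  -- the bipartite word
  set Om : ℕ → List (Fin n) := fun q => (List.replicate q (Lp ++ Lm)).flatten with hOm
  have hOmsucc : ∀ q, Om (q + 1) = Om q ++ (Lp ++ Lm) := by
    intro q
    show (List.replicate (q+1) (Lp ++ Lm)).flatten
      = (List.replicate q (Lp ++ Lm)).flatten ++ (Lp ++ Lm)
    simp [List.replicate_succ']
  have hrhoOm : ∀ q, ρ (cs.wordProd (Om q)) = T ^ q := by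
    intro q
    induction q with
    | zero =>
      rw [hOm]
      simp only [List.replicate, List.flatten_nil, cs.wordProd_nil, map_one, pow_zero]
    | succ q ih =>
      rw [hOmsucc, cs.wordProd_append, map_mul, ih, cs.wordProd_append, map_mul,
        hrho' Lp, hrho' Lm, ← hTpdef, ← hTmdef, ← hTdef, pow_succ]
  -- main induction on the number of rounds
  have main : ∀ q, cs.length (cs.wordProd (Om q)) = q * n ∧
      (∀ q' < q, (∀ k, ε k = 1 → ∀ m, 0 ≤ ((T ^ q') (Stmt14.ev k)) m) ∧
        (∀ k, ε k = (-1:ℤˣ) → ∀ m, 0 ≤ ((T ^ q') (Tp (Stmt14.ev k))) m)) := by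
    intro q
    induction q with
    | zero =>
      constructor
      · rw [hOm]
        simp only [List.replicate, List.flatten_nil, cs.wordProd_nil, cs.length_one, Nat.zero_mul]
      · omega
    | succ q ih =>
      obtain ⟨hlen0, hinv⟩ := ih
      have hrootsP : ∀ q' < q, ∀ k ∈ Lp, ∀ m,
          0 ≤ ((T ^ q') ((1 : Module.End ℝ (Fin n → ℝ)) (Stmt14.ev k))) m := by
        intro q' hq' k hk m
        simp only [Module.End.one_apply]
        exact (hinv q' hq').1 k (hsignLp k hk) m
      have hp1 := Stmt14.pass cs ρ hoff hbip hd hu hdich hrho' T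
        (1 : Module.End ℝ (Fin n → ℝ)) q hstepS hstepP 1 Lp hLpnd hsignLp
        (cs.wordProd (Om q)) (q * n) (by rw [hrhoOm q, mul_one]) hbaseP hrootsP
        Lp [] rfl (by rw [cs.wordProd_nil, mul_one, List.length_nil, Nat.add_zero]; exact hlen0)
      obtain ⟨hlen1, hroots1⟩ := hp1
      have hrootsM : ∀ q' < q, ∀ k ∈ Lm, ∀ m,
          0 ≤ ((T ^ q') (Tp (Stmt14.ev k))) m := by
        intro q' hq' k hk m
        exact (hinv q' hq').2 k (hsignLm k hk) m
      have hw0'rho : ρ (cs.wordProd (Om q) * cs.wordProd Lp) = T ^ q * Tp := by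
        rw [map_mul, hrhoOm, hrho' Lp, ← hTpdef]
      have hp2 := Stmt14.pass cs ρ hoff hbip hd hu hdich hrho' T Tp q hstepS hstepP
        (-1) Lm hLmnd hsignLm (cs.wordProd (Om q) * cs.wordProd Lp) (q * n + Lp.length)
        hw0'rho hbaseM hrootsM
        Lm [] rfl (by rw [cs.wordProd_nil, mul_one, List.length_nil, Nat.add_zero]; exact hlen1)
      obtain ⟨hlen2, hroots2⟩ := hp2
      constructor
      · rw [hOmsucc, cs.wordProd_append, cs.wordProd_append, ← mul_assoc]
        rw [hlen2, Nat.succ_mul]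
        omega
      · intro q' hq'
        rcases Nat.lt_succ_iff_lt_or_eq.mp hq' with h | h
        · exact hinv q' h
        · subst h
          constructor
          · intro k hk m
            have := hroots1 k ((hLpmem k).mpr hk) m
            simpa only [Module.End.one_apply] using this
          · intro k hk m
            exact hroots2 k ((hLmmem k).mpr hk) m
  -- conclusion
  have hprodpow : ∀ q : ℕ, (cs.wordProd Lp * cs.wordProd Lm) ^ q = cs.wordProd (Om q) := by
    intro q
    induction q with
    | zero =>
      rw [pow_zero, hOm]
      simp only [List.replicate, List.flatten_nil, cs.wordProd_nil]
    | succ q ih =>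
      rw [pow_succ, ih, hOmsucc, cs.wordProd_append, cs.wordProd_append]
  have hgoal1 : ((Lsgn n ε 1).map cs.simple).prod = cs.wordProd Lp := rfl
  have hgoal2 : ((Lsgn n ε (-1)).map cs.simple).prod = cs.wordProd Lm := rfl
  rw [hgoal1, hgoal2, hprodpow r, (main r).1]


end
end

section
/- Let A = (a_{ij}) be an indecomposable symmetrizable generalized Cartan matrix of infinite type. Then there exist a real number ρ ≥ 2 and positive real numbers c₁,…,cₙ such that −∑_{i ≠ j} a_{ij} c_i = ρ·c_j for every j ∈ {1,…,n}; that is, (c₁,…,cₙ) is a strictly positive eigenvector of the transpose of the matrix A' = 2·Id − A, with eigenvalue ρ ≥ 2. -/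
/-! With `s = √d`, the matrix `S = diag(s) (2 - A) diag(s)⁻¹` is symmetric, entrywise nonnegative,
and its support graph is that of `A`. Take an eigenvector `v` for the top eigenvalue `ρ` of `S`.
Since `S ≥ 0`, the vector `|v|` has Rayleigh quotient at least that of `v`; as `ρ - S` is positive
semidefinite, `|v|` is then an eigenvector too, and connectivity makes all its entries positive, so
`c = s |v|` is a positive eigenvector of `(2 - A)ᵀ`. Infinite type gives `x ≠ 0` with
`xᵀ D A x ≤ 0`, i.e. `s x` has Rayleigh quotient at least `2` for `S`, whence `ρ ≥ 2`. -/

open Matrix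
open scoped MatrixOrder

theorem sum_mul_sq_pos {ι : Type*} [Fintype ι] {d x : ι → ℝ} (hd : ∀ i, 0 < d i) (hx : x ≠ 0) :
    0 < ∑ i, d i * x i ^ 2 := by
  obtain ⟨i, hi⟩ := Function.ne_iff.1 hx
  exact Finset.sum_pos' (fun j _ => by have := hd j; positivity)
    ⟨i, Finset.mem_univ i, mul_pos (hd i) (sq_pos_of_ne_zero hi)⟩

theorem SimpleGraph.Reachable.imp_of_forall_adj {V : Type*} {G : SimpleGraph V} {p : V → Prop}
    (hp : ∀ a b, G.Adj a b → p a → p b) {u v : V} (huv : G.Reachable u v) : p u → p v := by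
  obtain ⟨w⟩ := huv
  induction w with
  | nil => exact id
  | cons hadj _ ih => exact fun hu => ih (hp _ _ hadj hu)

namespace Matrix

section PerronFrobenius

variable {ι : Type*} [Fintype ι]

theorem dotProduct_mulVec_le_abs {S : Matrix ι ι ℝ} (hS : ∀ i j, 0 ≤ S i j) (v : ι → ℝ) :
    v ⬝ᵥ S *ᵥ v ≤ |v| ⬝ᵥ S *ᵥ |v| := by
  simp only [dotProduct, mulVec, Finset.mul_sum]
  refine Finset.sum_le_sum fun i _ => Finset.sum_le_sum fun j _ => ?_
  calc v i * (S i j * v j) ≤ |v i * (S i j * v j)| := le_abs_self _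
    _ = |v| i * (S i j * |v| j) := by simp [abs_mul, abs_of_nonneg (hS i j)]

theorem IsHermitian.exists_eigenvector_posSemidef_smul_one_sub [DecidableEq ι] [Nonempty ι]
    {S : Matrix ι ι ℝ} (hS : S.IsHermitian) :
    ∃ ρ : ℝ, ∃ v : ι → ℝ, v ≠ 0 ∧ S *ᵥ v = ρ • v ∧ (ρ • 1 - S).PosSemidef := by
  obtain ⟨j, hj⟩ := Finite.exists_max hS.eigenvalues
  refine ⟨hS.eigenvalues j, hS.eigenvectorBasis j, ?_, hS.mulVec_eigenvectorBasis j, ?_⟩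
  · simpa using hS.eigenvectorBasis.orthonormal.ne_zero j
  · have : S ≤ algebraMap ℝ _ (hS.eigenvalues j) := by
      refine le_algebraMap_of_spectrum_le fun x hx => ?_
      rw [hS.spectrum_real_eq_range_eigenvalues] at hx
      obtain ⟨i, rfl⟩ := hx
      exact hj i
    rwa [le_iff, Algebra.algebraMap_eq_smul_one] at this

theorem dotProduct_smul_one_sub_mulVec [DecidableEq ι] (S : Matrix ι ι ℝ) (ρ : ℝ) (x : ι → ℝ) :
    x ⬝ᵥ (ρ • 1 - S) *ᵥ x = ρ * (x ⬝ᵥ x) - x ⬝ᵥ S *ᵥ x := by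
  simp [sub_mulVec, smul_mulVec, dotProduct_sub, dotProduct_smul]

theorem mulVec_abs_eq_smul_abs {S : Matrix ι ι ℝ} [DecidableEq ι] {ρ : ℝ} {v : ι → ℝ}
    (hS : ∀ i j, 0 ≤ S i j) (hρ : (ρ • 1 - S).PosSemidef) (hv : S *ᵥ v = ρ • v) :
    S *ᵥ |v| = ρ • |v| := by
  have hzero : |v| ⬝ᵥ (ρ • 1 - S) *ᵥ |v| = 0 := by
    refine le_antisymm ?_ (hρ.dotProduct_mulVec_nonneg |v|)
    have hvv : |v| ⬝ᵥ |v| = v ⬝ᵥ v := by simp [dotProduct]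
    have hvSv : v ⬝ᵥ S *ᵥ v = ρ * (v ⬝ᵥ v) := by rw [hv, dotProduct_smul, smul_eq_mul]
    rw [dotProduct_smul_one_sub_mulVec, hvv]
    linarith [dotProduct_mulVec_le_abs hS v]
  have := (hρ.dotProduct_mulVec_zero_iff |v|).1 (by simpa using hzero)
  rwa [sub_mulVec, smul_mulVec, one_mulVec, sub_eq_zero, eq_comm] at this

theorem pos_of_mulVec_eq_smul {S : Matrix ι ι ℝ} (hS : ∀ i j, 0 ≤ S i j) {G : SimpleGraph ι}
    (hG : G.Preconnected) (hSG : ∀ i j, G.Adj i j → 0 < S i j) {ρ : ℝ} {w : ι → ℝ}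
    (hw : 0 ≤ w) (hw0 : w ≠ 0) (heig : S *ᵥ w = ρ • w) (i : ι) : 0 < w i := by
  have hspread : ∀ a b, G.Adj a b → w a = 0 → w b = 0 := by
    intro a b hab ha
    have hsum : ∑ k, S a k * w k = 0 := by
      simpa [mulVec, dotProduct, ha] using congrFun heig a
    have := (Finset.sum_eq_zero_iff_of_nonneg fun k _ => mul_nonneg (hS a k) (hw k)).1 hsum b
      (Finset.mem_univ b)
    exact (mul_eq_zero.1 this).resolve_left (hSG a b hab).ne'
  refine (hw i).lt_of_ne fun hi => hw0 (funext fun j => ?_)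
  exact (hG i j).imp_of_forall_adj hspread hi.symm

theorem IsSymm.exists_pos_eigenvector_posSemidef [DecidableEq ι] {S : Matrix ι ι ℝ}
    (hSymm : S.IsSymm) (hS : ∀ i j, 0 ≤ S i j) {G : SimpleGraph ι} (hG : G.Connected)
    (hSG : ∀ i j, G.Adj i j → 0 < S i j) :
    ∃ ρ : ℝ, ∃ w : ι → ℝ, (∀ i, 0 < w i) ∧ S *ᵥ w = ρ • w ∧ (ρ • 1 - S).PosSemidef := by
  have := hG.nonempty
  obtain ⟨ρ, v, hv0, hv, hρ⟩ :=
    (isHermitian_iff_isSymm.2 hSymm).exists_eigenvector_posSemidef_smul_one_sub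
  have heig := mulVec_abs_eq_smul_abs hS hρ hv
  refine ⟨ρ, |v|, pos_of_mulVec_eq_smul hS hG.preconnected hSG (abs_nonneg v) ?_ heig, heig, hρ⟩
  simpa using hv0

end PerronFrobenius

section Symmetrization

variable {ι : Type*} {d : ι → ℝ} {M : Matrix ι ι ℝ}

noncomputable def symmetrization (d : ι → ℝ) (M : Matrix ι ι ℝ) : Matrix ι ι ℝ :=
  of fun i j => √(d i) * M i j / √(d j)

theorem isSymm_symmetrization (hd : ∀ i, 0 < d i) (hsym : ∀ i j, d i * M i j = d j * M j i) :
    (symmetrization d M).IsSymm := by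
  refine IsSymm.ext fun i j => ?_
  have hi := Real.sqrt_pos.2 (hd i)
  have hj := Real.sqrt_pos.2 (hd j)
  simp only [symmetrization, of_apply]
  rw [div_eq_div_iff hi.ne' hj.ne']
  calc √(d j) * M j i * √(d j) = d j * M j i := by
        rw [mul_right_comm, Real.mul_self_sqrt (hd j).le]
    _ = d i * M i j := (hsym i j).symm
    _ = √(d i) * M i j * √(d i) := by rw [mul_right_comm, Real.mul_self_sqrt (hd i).le]

theorem symmetrization_nonneg (hM : ∀ i j, 0 ≤ M i j) (i j : ι) :
    0 ≤ symmetrization d M i j := by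
  have := hM i j
  simp only [symmetrization, of_apply]
  positivity

theorem symmetrization_pos (hd : ∀ i, 0 < d i) {i j : ι} (hij : 0 < M i j) :
    0 < symmetrization d M i j := by
  have := hd i
  have := hd j
  simp only [symmetrization, of_apply]
  positivity

variable [Fintype ι]

theorem dotProduct_symmetrization_mulVec (hd : ∀ i, 0 < d i) (x : ι → ℝ) :
    (fun i => √(d i) * x i) ⬝ᵥ symmetrization d M *ᵥ (fun i => √(d i) * x i) =
      ∑ i, ∑ j, d i * M i j * x i * x j := by
  simp only [dotProduct, mulVec, symmetrization, of_apply, Finset.mul_sum]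
  refine Finset.sum_congr rfl fun i _ => Finset.sum_congr rfl fun j _ => ?_
  have hj := (Real.sqrt_pos.2 (hd j)).ne'
  field_simp
  rw [Real.sq_sqrt (hd i).le]
  ring

theorem transpose_mulVec_eq_smul_of_symmetrization (hd : ∀ i, 0 < d i) {ρ : ℝ} {w : ι → ℝ}
    (hw : (symmetrization d M)ᵀ *ᵥ w = ρ • w) :
    Mᵀ *ᵥ (fun i => √(d i) * w i) = ρ • fun i => √(d i) * w i := by
  ext j
  have hj := (Real.sqrt_pos.2 (hd j)).ne'
  have hwj := congrFun hw j
  simp only [mulVec, dotProduct, transpose_apply, symmetrization, of_apply, Pi.smul_apply,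
    smul_eq_mul] at hwj ⊢
  calc ∑ i, M i j * (√(d i) * w i) = √(d j) * ∑ i, √(d i) * M i j / √(d j) * w i := by
        rw [Finset.mul_sum]
        refine Finset.sum_congr rfl fun i _ => ?_
        field_simp
    _ = ρ * (√(d j) * w j) := by rw [hwj]; ring

theorem exists_pos_eigenvector_transpose_of_symmetrizable [DecidableEq ι]
    (hd : ∀ i, 0 < d i) (hM : ∀ i j, 0 ≤ M i j) (hsym : ∀ i j, d i * M i j = d j * M j i)
    {G : SimpleGraph ι} (hG : G.Connected) (hMG : ∀ i j, G.Adj i j → 0 < M i j) :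
    ∃ ρ : ℝ, ∃ c : ι → ℝ, (∀ i, 0 < c i) ∧ Mᵀ *ᵥ c = ρ • c ∧
      ∀ x : ι → ℝ, ∑ i, ∑ j, d i * M i j * x i * x j ≤ ρ * ∑ i, d i * x i ^ 2 := by
  have hS := isSymm_symmetrization hd hsym
  obtain ⟨ρ, w, hw, heig, hρ⟩ := hS.exists_pos_eigenvector_posSemidef
    (symmetrization_nonneg hM) hG fun i j hij => symmetrization_pos hd (hMG i j hij)
  refine ⟨ρ, fun i => √(d i) * w i, fun i => mul_pos (Real.sqrt_pos.2 (hd i)) (hw i),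
    transpose_mulVec_eq_smul_of_symmetrization hd (hS.eq.symm ▸ heig), fun x => ?_⟩
  have hx := hρ.dotProduct_mulVec_nonneg fun i => √(d i) * x i
  rw [star_trivial, dotProduct_smul_one_sub_mulVec, dotProduct_symmetrization_mulVec hd] at hx
  have hnorm : (fun i => √(d i) * x i) ⬝ᵥ (fun i => √(d i) * x i) = ∑ i, d i * x i ^ 2 := by
    refine Finset.sum_congr rfl fun i _ => ?_
    rw [mul_mul_mul_comm, Real.mul_self_sqrt (hd i).le, sq]
  rw [hnorm] at hx
  linarith

end Symmetrization

section CartanMatrix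

variable {ι : Type*} [DecidableEq ι] {A : Matrix ι ι ℤ} {d : ι → ℤ}

theorem two_sub_map_apply (i j : ι) :
    (2 - A.map (↑) : Matrix ι ι ℝ) i j = (if i = j then 2 else 0) - A i j := by
  simp [Matrix.sub_apply, ofNat_apply]

theorem two_sub_map_nonneg (hdiag : ∀ i, A i i = 2) (hoff : ∀ i j, i ≠ j → A i j ≤ 0)
    (i j : ι) : 0 ≤ (2 - A.map (↑) : Matrix ι ι ℝ) i j := by
  rw [two_sub_map_apply]
  split_ifs with h
  · simp [h, hdiag]
  · simpa using hoff i j h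

theorem two_sub_map_symmetrizable (hsym : ∀ i j, d i * A i j = d j * A j i) (i j : ι) :
    (d i : ℝ) * (2 - A.map (↑) : Matrix ι ι ℝ) i j = d j * (2 - A.map (↑) : Matrix ι ι ℝ) j i := by
  by_cases h : i = j
  · rw [h]
  · rw [two_sub_map_apply, two_sub_map_apply, if_neg h, if_neg (Ne.symm h), zero_sub, zero_sub,
      mul_neg, mul_neg, neg_inj]
    exact_mod_cast hsym i j

theorem two_sub_map_pos_of_adj (hoff : ∀ i j, i ≠ j → A i j ≤ 0) (hd : ∀ i, 0 < d i)
    (hsym : ∀ i j, d i * A i j = d j * A j i) {i j : ι}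
    (hij : (SimpleGraph.fromRel fun i j => A i j ≠ 0).Adj i j) :
    0 < (2 - A.map (↑) : Matrix ι ι ℝ) i j := by
  obtain ⟨hne, hA⟩ := (SimpleGraph.fromRel_adj _ _ _).1 hij
  have hAij : A i j ≠ 0 := by
    refine hA.elim id fun hji h => hji ?_
    simpa [h, (hd j).ne'] using (hsym i j).symm
  rw [two_sub_map_apply, if_neg hne, zero_sub, neg_pos]
  exact_mod_cast (hoff i j hne).lt_of_ne hAij

variable [Fintype ι]

theorem transpose_two_sub_map_mulVec_apply (hdiag : ∀ i, A i i = 2) (c : ι → ℝ) (j : ι) :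
    ((2 - A.map (↑) : Matrix ι ι ℝ)ᵀ *ᵥ c) j = -∑ i ∈ Finset.univ.erase j, (A i j : ℝ) * c i := by
  rw [mulVec, dotProduct, ← Finset.add_sum_erase _ _ (Finset.mem_univ j), ← Finset.sum_neg_distrib]
  rw [transpose_apply, two_sub_map_apply, if_pos rfl, hdiag, Int.cast_ofNat, sub_self, zero_mul,
    zero_add]
  refine Finset.sum_congr rfl fun i hi => ?_
  rw [transpose_apply, two_sub_map_apply, if_neg (Finset.ne_of_mem_erase hi)]
  ring

theorem sum_sum_two_sub_map (d x : ι → ℝ) :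
    ∑ i, ∑ j, d i * (2 - A.map (↑) : Matrix ι ι ℝ) i j * x i * x j =
      2 * ∑ i, d i * x i ^ 2 - ∑ i, ∑ j, d i * A i j * x i * x j := by
  simp only [two_sub_map_apply, mul_sub, sub_mul, Finset.sum_sub_distrib, mul_ite, ite_mul,
    mul_zero, zero_mul, Finset.sum_ite_eq, Finset.mem_univ, if_true, Finset.mul_sum]
  congr 1
  exact Finset.sum_congr rfl fun i _ => by ring

end CartanMatrix

end Matrix

/-- If `A` is an indecomposable symmetrizable generalized Cartan
matrix of infinite type, then there are `ρ ≥ 2` and positive reals `c₁,…,cₙ` with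
`−∑_{i ≠ j} a_{ij} cᵢ = ρ·cⱼ` for every `j`. -/
theorem exists_positive_eigenvector (n : ℕ)
    (A : Matrix (Fin n) (Fin n) ℤ)
    (hdiag : ∀ i, A i i = 2) (hoff : ∀ i j, i ≠ j → A i j ≤ 0)
    (d : Fin n → ℤ) (hd : ∀ i, 0 < d i)
    (hsym : ∀ i j, d i * A i j = d j * A j i)
    (hind : (SimpleGraph.fromRel (fun i j => A i j ≠ 0)).Connected)
    (hinf : ¬ ∀ x : Fin n → ℚ, x ≠ 0 →
      0 < ∑ i, ∑ j, ((d i * A i j : ℤ) : ℚ) * x i * x j) :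
    ∃ (ρ : ℝ) (c : Fin n → ℝ), 2 ≤ ρ ∧ (∀ i, 0 < c i) ∧
      ∀ j, -(∑ i ∈ Finset.univ.erase j, (A i j : ℝ) * c i) = ρ * c j := by
  obtain ⟨x, hx0, hx⟩ :
      ∃ x : Fin n → ℚ, x ≠ 0 ∧ ∑ i, ∑ j, ((d i * A i j : ℤ) : ℚ) * x i * x j ≤ 0 := by
    simpa using hinf
  have hdR : ∀ i, (0 : ℝ) < d i := fun i => Int.cast_pos.2 (hd i)
  obtain ⟨ρ, c, hc, heig, hbound⟩ :=
    exists_pos_eigenvector_transpose_of_symmetrizable (M := 2 - A.map (↑)) hdR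
      (two_sub_map_nonneg hdiag hoff) (two_sub_map_symmetrizable hsym) hind
      fun _ _ => two_sub_map_pos_of_adj hoff hd hsym
  refine ⟨ρ, c, ?_, hc, fun j => ?_⟩
  · have hx0' : (fun i => (x i : ℝ)) ≠ 0 :=
      fun h => hx0 (funext fun i => by simpa using congrFun h i)
    have hx' : ∑ i, ∑ j, (d i : ℝ) * A i j * x i * x j ≤ 0 := by exact_mod_cast hx
    have hρx := hbound fun i => (x i : ℝ)
    rw [sum_sum_two_sub_map] at hρx
    exact le_of_mul_le_mul_right (by linarith) (sum_mul_sq_pos hdR hx0')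
  · rw [← transpose_two_sub_map_mulVec_apply hdiag, heig, Pi.smul_apply, smul_eq_mul]
end
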